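/- arXiv:2110.13743 — 4 statements merged into one kernel-verified Lean document; each statement's English description precedes it below -/
import Mathlib

section
/- Let R > 0 and let (a_{n,N})_{n,N≥0} be complex numbers such that for each n the power series T_n(z) := Σ_{N≥0} a_{n,N}·z^N converges for all z ∈ ℂ with |z| < R. Suppose that for every r₁ ∈ (0,R) one has Σ_{n≥0} sup_{|z|≤r₁} |T_n(z)| < ∞. Then for every r ∈ (0,R), Σ_{n,N≥0} |a_{n,N}|·r^N < ∞. -/
open scoped NNReal ENNReal

open FormalMultilinearSeries Metric Real

/-- Suppose each `T_n(z) = Σ_N a_{n,N} z^N` converges on `|z| < R` and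
`Σ_n sup_{|z|≤r₁} |T_n(z)| < ∞` for every `r₁ ∈ (0,R)`. Then
`Σ_{n,N} |a_{n,N}| r^N < ∞` for every `r ∈ (0,R)`. -/
theorem double_seq_taylor_converse (R : ℝ) (hR : 0 < R) (a : ℕ → ℕ → ℂ)
    (hconv : ∀ n : ℕ, ∀ z : ℂ, ‖z‖ < R → Summable fun N : ℕ => a n N * z ^ N)
    (hsup : ∀ r₁ : ℝ, 0 < r₁ → r₁ < R →
      (∑' n : ℕ, ⨆ z ∈ Metric.closedBall (0 : ℂ) r₁,
        (‖∑' N : ℕ, a n N * z ^ N‖₊ : ℝ≥0∞)) < ⊤) :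
    ∀ r : ℝ, 0 < r → r < R →
      Summable fun p : ℕ × ℕ => ‖a p.1 p.2‖ * r ^ p.2 := by
  intro r hr hrR
  -- choose intermediate radius r₁
  set r₁ : ℝ := (r + R) / 2 with hr₁def
  have hr₁pos : 0 < r₁ := by positivity
  have hrr₁ : r < r₁ := by rw [hr₁def]; linarith
  have hr₁R : r₁ < R := by rw [hr₁def]; linarith
  -- the functions
  set f : ℕ → ℂ → ℂ := fun n z => ∑' N : ℕ, a n N * z ^ N with hfdef
  set p : ℕ → FormalMultilinearSeries ℂ ℂ ℂ := fun n => ofScalars ℂ (a n) with hpdef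
  have hsum_eq : ∀ n z, (p n).sum z = f n z := by
    intro n z
    refine tsum_congr fun N => ?_
    show (ofScalars ℂ (a n) N fun _ => z) = a n N * z ^ N
    rw [ofScalars_apply_eq, smul_eq_mul]
  -- radius of p n exceeds r₁
  have hrad : ∀ n, (ENNReal.ofReal r₁) < (p n).radius := by
    intro n
    set t : ℝ := (r₁ + R) / 2 with htdef
    have htpos : 0 < t := by positivity
    have hr₁t : r₁ < t := by rw [htdef]; linarith
    have htR : t < R := by rw [htdef]; linarith
    have hsumm : Summable fun N : ℕ => a n N * (t : ℂ) ^ N := by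
      apply hconv n t
      simpa [abs_of_pos htpos] using htR
    have ht : (t.toNNReal : ℝ≥0∞) ≤ (p n).radius := by
      apply FormalMultilinearSeries.le_radius_of_tendsto (l := 0)
      have := hsumm.tendsto_atTop_zero
      have h2 := this.norm
      simp only [norm_zero] at h2
      refine h2.congr fun N => ?_
      show ‖a n N * (t : ℂ) ^ N‖ = ‖p n N‖ * (t.toNNReal : ℝ) ^ N
      rw [show (p n N) = ofScalars ℂ (a n) N from rfl, ofScalars_norm,
        Real.coe_toNNReal _ htpos.le, norm_mul, norm_pow, Complex.norm_real,
        Real.norm_eq_abs, abs_of_pos htpos]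
    calc (ENNReal.ofReal r₁) < ENNReal.ofReal t :=
          (ENNReal.ofReal_lt_ofReal_iff htpos).mpr hr₁t
      _ ≤ (p n).radius := ht
  -- hence f n has the power series p n, and is differentiable on the closed ball r₁
  have hfps : ∀ n, HasFPowerSeriesOnBall (f n) (p n) 0 (p n).radius := by
    intro n
    have h0 : 0 < (p n).radius := lt_of_le_of_lt zero_le (hrad n)
    exact ((p n).hasFPowerSeriesOnBall h0).congr fun z hz => hsum_eq n _
  have hdiff : ∀ n, DifferentiableOn ℂ (f n) (closedBall (0 : ℂ) r₁) := by
    intro n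
    apply ((hfps n).differentiableOn).mono
    intro z hz
    simp only [EMetric.mem_ball, edist_zero_right]
    calc (‖z‖₊ : ℝ≥0∞) ≤ ENNReal.ofReal r₁ := by
          have : ‖z‖ ≤ r₁ := by simpa using hz
          rw [← ENNReal.ofReal_coe_nnreal, coe_nnnorm]
          exact ENNReal.ofReal_le_ofReal this
      _ < (p n).radius := hrad n
  -- Cauchy power series identification
  have hcps : ∀ n, p n = cauchyPowerSeries (f n) 0 r₁ := by
    intro n
    have hd' : DifferentiableOn ℂ (f n) (closedBall (0 : ℂ) (r₁.toNNReal : ℝ)) := by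
      rw [Real.coe_toNNReal _ hr₁pos.le]
      exact hdiff n
    have h2 := hd'.hasFPowerSeriesOnBall (by simpa using hr₁pos)
    rw [Real.coe_toNNReal _ hr₁pos.le] at h2
    exact (hfps n).hasFPowerSeriesAt.eq_formalMultilinearSeries h2.hasFPowerSeriesAt
  -- the sup bounds
  set g : ℕ → ℝ≥0∞ := fun n => ⨆ z ∈ Metric.closedBall (0 : ℂ) r₁,
      (‖∑' N : ℕ, a n N * z ^ N‖₊ : ℝ≥0∞) with hgdef
  have hgfin : ∀ n, g n ≠ ⊤ := by
    intro n
    exact ne_top_of_le_ne_top (hsup r₁ hr₁pos hr₁R).ne (ENNReal.le_tsum n)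
  set C : ℕ → ℝ := fun n => (g n).toReal with hCdef
  have hC0 : ∀ n, 0 ≤ C n := fun n => ENNReal.toReal_nonneg
  have hfC : ∀ n, ∀ z ∈ closedBall (0 : ℂ) r₁, ‖f n z‖ ≤ C n := by
    intro n z hz
    have h1 : (‖f n z‖₊ : ℝ≥0∞) ≤ g n :=
      le_biSup (fun z => (‖∑' N : ℕ, a n N * z ^ N‖₊ : ℝ≥0∞)) hz
    have := ENNReal.toReal_mono (hgfin n) h1
    simpa using this
  have hCsum : Summable C := ENNReal.summable_toReal (hsup r₁ hr₁pos hr₁R).ne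
  -- coefficient bounds
  have hcoeff : ∀ n N, ‖a n N‖ ≤ C n * r₁⁻¹ ^ N := by
    intro n N
    have h1 : ‖p n N‖ ≤ ((2 * π)⁻¹ * ∫ θ : ℝ in (0)..2 * π,
        ‖f n (circleMap 0 r₁ θ)‖) * |r₁|⁻¹ ^ N := by
      rw [hcps n]; exact norm_cauchyPowerSeries_le _ _ _ _
    have hnorm : ‖p n N‖ = ‖a n N‖ := ofScalars_norm _ _ _
    have hcont : ContinuousOn (f n) (closedBall (0 : ℂ) r₁) := (hdiff n).continuousOn
    have hcirc : ∀ θ : ℝ, circleMap 0 r₁ θ ∈ closedBall (0 : ℂ) r₁ := fun θ => by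
      simpa [abs_of_pos hr₁pos] using circleMap_mem_closedBall (0 : ℂ) hr₁pos.le θ
    have hint : (∫ θ : ℝ in (0)..2 * π, ‖f n (circleMap 0 r₁ θ)‖) ≤ 2 * π * C n := by
      have hci : Continuous fun θ : ℝ => ‖f n (circleMap 0 r₁ θ)‖ := by
        apply Continuous.norm
        exact hcont.comp_continuous (continuous_circleMap 0 r₁) hcirc
      calc (∫ θ : ℝ in (0)..2 * π, ‖f n (circleMap 0 r₁ θ)‖)
          ≤ ∫ _ : ℝ in (0)..2 * π, C n := by
            apply intervalIntegral.integral_mono_on Real.two_pi_pos.le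
              (hci.intervalIntegrable _ _) (intervalIntegrable_const)
            intro θ _
            exact hfC n _ (hcirc θ)
        _ = 2 * π * C n := by simp [mul_comm]
    have h2 : ‖a n N‖ ≤ ((2 * π)⁻¹ * (2 * π * C n)) * |r₁|⁻¹ ^ N := by
      rw [← hnorm]
      refine h1.trans ?_
      refine mul_le_mul_of_nonneg_right ?_ (by positivity)
      exact mul_le_mul_of_nonneg_left hint (by positivity)
    have h3 : (2 * π)⁻¹ * (2 * π * C n) = C n := by
      rw [← mul_assoc, inv_mul_cancel₀ Real.two_pi_pos.ne', one_mul]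
    rwa [h3, abs_of_pos hr₁pos] at h2
  -- finish by comparison with a product of summable series
  have hq : r / r₁ < 1 := (div_lt_one hr₁pos).mpr hrr₁
  have hq0 : 0 ≤ r / r₁ := by positivity
  have hgeo : Summable fun N : ℕ => (r / r₁) ^ N := summable_geometric_of_lt_one hq0 hq
  have hprod : Summable fun q : ℕ × ℕ => C q.1 * (r / r₁) ^ q.2 :=
    hCsum.mul_of_nonneg hgeo hC0 fun N => by positivity
  apply Summable.of_nonneg_of_le (fun q => by positivity) _ hprod
  rintro ⟨n, N⟩
  calc ‖a n N‖ * r ^ N ≤ (C n * r₁⁻¹ ^ N) * r ^ N :=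
        mul_le_mul_of_nonneg_right (hcoeff n N) (by positivity)
    _ = C n * (r / r₁) ^ N := by
        rw [div_pow, div_eq_mul_inv, ← inv_pow]; ring
end

section
/- Let 0 < R ≤ 1 and, for each n ∈ ℕ, let P_n be a finitely supported ℂ-valued function on compositions. Assume that for every r ∈ (0,R), Σ_{n≥0} sup_{|z|≤r} |Li_{P_n}(z)| < ∞, so that f(z) := Σ_{n≥0} Li_{P_n}(z) defines an analytic function on the disk |z| < R and f(z)/(1−z) = Σ_{N≥0} a_N·z^N there. Then for every N ∈ ℕ, the series Σ_{n≥0} H_{P_n}(N) converges absolutely and its sum equals a_N. -/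
open scoped NNReal ENNReal

/-- A composition: a finite list of positive integers. -/
abbrev Comp := List ℕ+

/-- Harmonic sum `H_s(N) = Σ_{N ≥ n₁ > … > n_r > 0} 1/(n₁^{s₁} ⋯ n_r^{s_r})`,
with `H_ε(N) = 1`. -/
noncomputable def Hc : Comp → ℕ → ℂ
  | [], _ => 1
  | s :: u, N => ∑ n ∈ Finset.Icc 1 N, ((n : ℂ) ^ (s : ℕ))⁻¹ * Hc u (n - 1)

/-- Polylogarithm `Li_s(z) = Σ_{n₁ > … > n_r > 0} z^{n₁}/(n₁^{s₁} ⋯ n_r^{s_r})`,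
with `Li_ε = 1` (the `n = 0` term of the `tsum` vanishes since `s ≥ 1`). -/
noncomputable def LiC : Comp → ℂ → ℂ
  | [], _ => 1
  | s :: u, z => ∑' n : ℕ, z ^ n * ((n : ℂ) ^ (s : ℕ))⁻¹ * Hc u (n - 1)

/-- Weight of a composition. -/
def wt (s : Comp) : ℕ := (s.map fun p => (p : ℕ)).sum

/-- `Li_P(z) = Σ_s P(s)·Li_s(z)` for a (finitely supported) function `P` on
compositions. -/
noncomputable def LiP (P : Comp → ℂ) (z : ℂ) : ℂ := ∑' s : Comp, P s * LiC s z

/-- `H_P(N) = Σ_s P(s)·H_s(N)` for a (finitely supported) function `P` on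
compositions. -/
noncomputable def HP (P : Comp → ℂ) (N : ℕ) : ℂ := ∑' s : Comp, P s * Hc s N

/-- Weight-`n` homogeneous component of a function on compositions. -/
def homog (α : Comp → ℂ) (n : ℕ) : Comp → ℂ := fun s => if wt s = n then α s else 0

/-- `Dom_R`: the set of `α` with `Σ_n sup_{|z|≤r} |Li_{α,n}(z)| < ∞` for every
`r ∈ (0,R)`. -/
noncomputable def DomR (R : ℝ) : Set (Comp → ℂ) :=
  {α | ∀ r : ℝ, 0 < r → r < R →
    (∑' n : ℕ, ⨆ z ∈ Metric.closedBall (0 : ℂ) r, (‖LiP (homog α n) z‖₊ : ℝ≥0∞)) < ⊤}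

lemma Hc_norm_le : ∀ (s : Comp) (N : ℕ), ‖Hc s N‖ ≤ (N : ℝ) ^ s.length
  | [], N => by simp [Hc]
  | s :: u, N => by
    rw [Hc]
    calc ‖∑ n ∈ Finset.Icc 1 N, ((n : ℂ) ^ (s : ℕ))⁻¹ * Hc u (n - 1)‖
        ≤ ∑ n ∈ Finset.Icc 1 N, ‖((n : ℂ) ^ (s : ℕ))⁻¹ * Hc u (n - 1)‖ :=
          norm_sum_le _ _
      _ ≤ ∑ n ∈ Finset.Icc 1 N, (N : ℝ) ^ u.length := by
          apply Finset.sum_le_sum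
          intro n hn
          rw [Finset.mem_Icc] at hn
          have hn1 : (1 : ℝ) ≤ (n : ℝ) := by exact_mod_cast hn.1
          rw [norm_mul]
          have h1 : ‖((n : ℂ) ^ (s : ℕ))⁻¹‖ ≤ 1 := by
            rw [norm_inv, norm_pow, Complex.norm_natCast]
            exact inv_le_one_of_one_le₀ (one_le_pow₀ hn1)
          have h2 : ‖Hc u (n - 1)‖ ≤ (N : ℝ) ^ u.length := by
            refine (Hc_norm_le u (n - 1)).trans ?_
            apply pow_le_pow_left₀ (by positivity)
            exact_mod_cast (Nat.sub_le n 1).trans hn.2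
          calc ‖((n : ℂ) ^ (s : ℕ))⁻¹‖ * ‖Hc u (n - 1)‖
              ≤ 1 * ((N : ℝ) ^ u.length) :=
                mul_le_mul h1 h2 (norm_nonneg _) one_pos.le
            _ = (N : ℝ) ^ u.length := one_mul _
      _ ≤ (N : ℝ) ^ (s :: u).length := by
          rw [Finset.sum_const, Nat.card_Icc, List.length_cons, pow_succ, nsmul_eq_mul,
            Nat.add_sub_cancel]
          exact le_of_eq (mul_comm _ _)

lemma summable_li_norm (u : Comp) (s : ℕ+) {z : ℂ} (hz : ‖z‖ < 1) :
    Summable fun n : ℕ => ‖z ^ n * ((n : ℂ) ^ (s : ℕ))⁻¹ * Hc u (n - 1)‖ := by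
  have hgeom : Summable (fun n : ℕ => (n : ℝ) ^ u.length * ‖z‖ ^ n) :=
    summable_pow_mul_geometric_of_norm_lt_one u.length (by rwa [Real.norm_eq_abs, abs_norm])
  refine hgeom.of_nonneg_of_le (fun n => norm_nonneg _) fun n => ?_
  rw [norm_mul, norm_mul, norm_pow]
  have h1 : ‖((n : ℂ) ^ (s : ℕ))⁻¹‖ ≤ 1 := by
    rcases Nat.eq_zero_or_pos n with rfl | hn
    · simp [zero_pow s.2.ne']
    · rw [norm_inv, norm_pow, Complex.norm_natCast]
      exact inv_le_one_of_one_le₀ (one_le_pow₀ (by exact_mod_cast hn))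
  have h2 : ‖Hc u (n - 1)‖ ≤ (n : ℝ) ^ u.length := by
    refine (Hc_norm_le u (n - 1)).trans ?_
    exact pow_le_pow_left₀ (by positivity) (by exact_mod_cast Nat.sub_le n 1) _
  calc ‖z‖ ^ n * ‖((n : ℂ) ^ (s : ℕ))⁻¹‖ * ‖Hc u (n - 1)‖
      ≤ ‖z‖ ^ n * 1 * ((n : ℝ) ^ u.length) := by
        apply mul_le_mul (mul_le_mul_of_nonneg_left h1 (by positivity)) h2 (norm_nonneg _)
        positivity
    _ = (n : ℝ) ^ u.length * ‖z‖ ^ n := by ring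

lemma hasSum_Hc_mul (s : Comp) {z : ℂ} (hz : ‖z‖ < 1) :
    HasSum (fun N : ℕ => Hc s N * z ^ N) (LiC s z * (1 - z)⁻¹) := by
  cases s with
  | nil => simpa [Hc, LiC] using hasSum_geometric_of_norm_lt_one hz
  | cons s u =>
    have hf := summable_li_norm u s hz
    have hg : Summable fun n : ℕ => ‖z ^ n‖ := by
      simp only [norm_pow]
      exact summable_geometric_of_lt_one (norm_nonneg z) hz
    have H := hasSum_sum_range_mul_of_summable_norm hf hg
    rw [tsum_geometric_of_norm_lt_one hz] at H
    rw [LiC]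
    have key : ∀ N : ℕ, ∑ k ∈ Finset.range (N + 1),
        z ^ k * ((k : ℂ) ^ (s : ℕ))⁻¹ * Hc u (k - 1) * z ^ (N - k)
        = Hc (s :: u) N * z ^ N := by
      intro N
      rw [Finset.sum_range_succ']
      have h0 : z ^ 0 * (((0 : ℕ) : ℂ) ^ (s : ℕ))⁻¹ * Hc u (0 - 1) * z ^ (N - 0) = 0 := by
        simp [zero_pow s.2.ne']
      rw [h0, add_zero, Hc, ← Finset.Ico_add_one_right_eq_Icc, Finset.sum_Ico_eq_sum_range,
        Nat.add_sub_cancel, Finset.sum_mul]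
      refine Finset.sum_congr rfl fun i hi => ?_
      rw [Finset.mem_range] at hi
      have hz' : z ^ (i + 1) * z ^ (N - (i + 1)) = z ^ N := by
        rw [← pow_add, Nat.add_sub_cancel' (Nat.succ_le_of_lt hi)]
      simp only [Nat.add_comm 1 i]
      calc z ^ (i + 1) * (((i + 1 : ℕ) : ℂ) ^ (s : ℕ))⁻¹ * Hc u (i + 1 - 1) * z ^ (N - (i + 1))
          = (((i + 1 : ℕ) : ℂ) ^ (s : ℕ))⁻¹ * Hc u (i + 1 - 1) * (z ^ (i + 1) * z ^ (N - (i + 1))) := by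
            ring
        _ = _ := by rw [hz']
    have heq : (fun n : ℕ => ∑ k ∈ Finset.range (n + 1),
        z ^ k * ((k : ℂ) ^ (s : ℕ))⁻¹ * Hc u (k - 1) * z ^ (n - k))
        = fun N : ℕ => Hc (s :: u) N * z ^ N := funext key
    rw [heq] at H
    exact H
lemma HP_eq_sum (P : Comp → ℂ) (hfin : (Function.support P).Finite) (N : ℕ) :
    HP P N = ∑ s ∈ hfin.toFinset, P s * Hc s N := by
  refine tsum_eq_sum fun s hs => ?_
  rw [Set.Finite.mem_toFinset, Function.mem_support, not_not] at hs
  rw [hs, zero_mul]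

lemma LiP_eq_sum (P : Comp → ℂ) (hfin : (Function.support P).Finite) (z : ℂ) :
    LiP P z = ∑ s ∈ hfin.toFinset, P s * LiC s z := by
  refine tsum_eq_sum fun s hs => ?_
  rw [Set.Finite.mem_toFinset, Function.mem_support, not_not] at hs
  rw [hs, zero_mul]

lemma hasSum_HP_mul (P : Comp → ℂ) (hfin : (Function.support P).Finite) {z : ℂ}
    (hz : ‖z‖ < 1) :
    HasSum (fun N : ℕ => HP P N * z ^ N) (LiP P z * (1 - z)⁻¹) := by
  have H : HasSum (fun N : ℕ => ∑ s ∈ hfin.toFinset, P s * Hc s N * z ^ N)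
      (∑ s ∈ hfin.toFinset, P s * (LiC s z * (1 - z)⁻¹)) := by
    refine hasSum_sum fun s _ => ?_
    have := (hasSum_Hc_mul s hz).mul_left (P s)
    simpa [mul_assoc] using this
  have heq : (fun N : ℕ => ∑ s ∈ hfin.toFinset, P s * Hc s N * z ^ N)
      = fun N : ℕ => HP P N * z ^ N := by
    funext N
    rw [HP_eq_sum P hfin, Finset.sum_mul]
  rw [heq] at H
  have : ∑ s ∈ hfin.toFinset, P s * (LiC s z * (1 - z)⁻¹)
      = LiP P z * (1 - z)⁻¹ := by
    rw [LiP_eq_sum P hfin, Finset.sum_mul]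
    exact Finset.sum_congr rfl fun s _ => by ring
  rwa [this] at H

lemma summable_HP_norm_mul (P : Comp → ℂ) (hfin : (Function.support P).Finite) {t : ℝ}
    (ht0 : 0 ≤ t) (ht1 : t < 1) :
    Summable fun N : ℕ => ‖HP P N‖ * t ^ N := by
  have hbig : Summable fun N : ℕ =>
      ∑ s ∈ hfin.toFinset, ‖P s‖ * ((N : ℝ) ^ s.length * t ^ N) := by
    refine summable_sum fun s _ => ?_
    exact (summable_pow_mul_geometric_of_norm_lt_one s.length
      (by rwa [Real.norm_eq_abs, abs_of_nonneg ht0])).mul_left ‖P s‖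
  refine hbig.of_nonneg_of_le (fun N => by positivity) fun N => ?_
  rw [HP_eq_sum P hfin]
  calc ‖∑ s ∈ hfin.toFinset, P s * Hc s N‖ * t ^ N
      ≤ (∑ s ∈ hfin.toFinset, ‖P s‖ * (N : ℝ) ^ s.length) * t ^ N := by
        apply mul_le_mul_of_nonneg_right _ (by positivity)
        refine (norm_sum_le _ _).trans (Finset.sum_le_sum fun s _ => ?_)
        rw [norm_mul]
        exact mul_le_mul_of_nonneg_left (Hc_norm_le s N) (norm_nonneg _)
    _ = ∑ s ∈ hfin.toFinset, ‖P s‖ * ((N : ℝ) ^ s.length * t ^ N) := by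
        rw [Finset.sum_mul]; exact Finset.sum_congr rfl fun s _ => by ring
lemma hasFPowerSeriesOnBall_HP (P : Comp → ℂ) (hfin : (Function.support P).Finite)
    {t : ℝ} (ht0 : 0 < t) (ht1 : t < 1) :
    HasFPowerSeriesOnBall (fun z => LiP P z * (1 - z)⁻¹)
      (FormalMultilinearSeries.ofScalars ℂ (fun N => HP P N)) 0 (ENNReal.ofReal t) := by
  constructor
  · show (t.toNNReal : ℝ≥0∞) ≤ _
    apply FormalMultilinearSeries.le_radius_of_summable
    have h := summable_HP_norm_mul P hfin ht0.le ht1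
    simpa only [FormalMultilinearSeries.ofScalars_norm,
      Real.coe_toNNReal t ht0.le] using h
  · exact ENNReal.ofReal_pos.mpr ht0
  · intro y hy
    rw [EMetric.mem_ball, edist_zero_right, ← ofReal_norm,
      ENNReal.ofReal_lt_ofReal_iff ht0] at hy
    simp only [FormalMultilinearSeries.ofScalars_apply_eq, smul_eq_mul, zero_add]
    exact hasSum_HP_mul P hfin (hy.trans ht1)

lemma coeff_bound (P : Comp → ℂ) (hfin : (Function.support P).Finite) {r C : ℝ}
    (hr0 : 0 < r) (hr1 : r < 1)
    (hC : ∀ z : ℂ, ‖z‖ ≤ r → ‖LiP P z‖ ≤ C) (N : ℕ) :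
    ‖HP P N‖ ≤ (1 - r)⁻¹ * C * r⁻¹ ^ N := by
  set g : ℂ → ℂ := fun z => LiP P z * (1 - z)⁻¹ with hgdef
  set t : ℝ := (1 + r) / 2 with htdef
  have ht0 : 0 < t := by positivity
  have ht1 : t < 1 := by rw [htdef]; linarith
  have hrt : r < t := by rw [htdef]; linarith
  have hball := hasFPowerSeriesOnBall_HP P hfin ht0 ht1
  have hsub : Metric.closedBall (0 : ℂ) r ⊆ Metric.eball (0 : ℂ) (ENNReal.ofReal t) := by
    intro z hz
    rw [Metric.mem_closedBall] at hz
    rw [Metric.mem_eball, edist_dist]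
    exact ENNReal.ofReal_lt_ofReal_iff ht0 |>.mpr (hz.trans_lt hrt)
  have hdiff : DifferentiableOn ℂ g (Metric.closedBall 0 r) :=
    hball.differentiableOn.mono hsub
  set Rn : ℝ≥0 := r.toNNReal with hRn
  have hRnr : (Rn : ℝ) = r := Real.coe_toNNReal r hr0.le
  have hcb : HasFPowerSeriesOnBall g (cauchyPowerSeries g 0 Rn) 0 Rn := by
    apply DifferentiableOn.hasFPowerSeriesOnBall
    · rwa [hRnr]
    · exact Real.toNNReal_pos.mpr hr0
  have huniq : FormalMultilinearSeries.ofScalars ℂ (fun N => HP P N)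
      = cauchyPowerSeries g 0 Rn :=
    hball.hasFPowerSeriesAt.eq_formalMultilinearSeries hcb.hasFPowerSeriesAt
  have hC0 : 0 ≤ C := (norm_nonneg _).trans (hC 0 (by simp [hr0.le]))
  set K : ℝ := (1 - r)⁻¹ * C with hK
  have hK0 : 0 ≤ K := by
    apply mul_nonneg _ hC0
    rw [inv_nonneg]
    linarith
  have hmem : ∀ θ : ℝ, circleMap 0 Rn θ ∈ Metric.closedBall (0 : ℂ) r := by
    intro θ
    rw [Metric.mem_closedBall, dist_zero_right, norm_circleMap_zero,
      abs_of_nonneg Rn.coe_nonneg, hRnr]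
  have hgb : ∀ θ : ℝ, ‖g (circleMap 0 Rn θ)‖ ≤ K := by
    intro θ
    set z : ℂ := circleMap 0 Rn θ with hzdef
    have hzn : ‖z‖ ≤ r := by
      have := hmem θ
      rwa [Metric.mem_closedBall, dist_zero_right] at this
    have h1 : ‖LiP P z‖ ≤ C := hC z hzn
    have h2 : ‖(1 - z)⁻¹‖ ≤ (1 - r)⁻¹ := by
      rw [norm_inv]
      apply inv_anti₀ (by linarith)
      calc 1 - r ≤ 1 - ‖z‖ := by linarith
        _ = ‖(1 : ℂ)‖ - ‖z‖ := by rw [norm_one]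
        _ ≤ ‖1 - z‖ := norm_sub_norm_le 1 z
    calc ‖g z‖ = ‖LiP P z‖ * ‖(1 - z)⁻¹‖ := norm_mul _ _
      _ ≤ C * (1 - r)⁻¹ := mul_le_mul h1 h2 (norm_nonneg _) hC0
      _ = K := mul_comm _ _
  have hcont : Continuous fun θ : ℝ => ‖g (circleMap 0 Rn θ)‖ := by
    apply Continuous.norm
    exact hdiff.continuousOn.comp_continuous (continuous_circleMap 0 Rn) hmem
  have hint : (∫ θ in (0:ℝ)..2 * Real.pi, ‖g (circleMap 0 Rn θ)‖) ≤ 2 * Real.pi * K := by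
    calc (∫ θ in (0:ℝ)..2 * Real.pi, ‖g (circleMap 0 Rn θ)‖)
        ≤ ∫ _ in (0:ℝ)..2 * Real.pi, K :=
          intervalIntegral.integral_mono_on Real.two_pi_pos.le
            (hcont.intervalIntegrable _ _) intervalIntegrable_const (fun θ _ => hgb θ)
      _ = 2 * Real.pi * K := by rw [intervalIntegral.integral_const, smul_eq_mul, sub_zero]
  have final : ‖cauchyPowerSeries g 0 Rn N‖ ≤ K * r⁻¹ ^ N := by
    refine (norm_cauchyPowerSeries_le g 0 Rn N).trans ?_
    have habs : |(Rn : ℝ)| = r := by rw [abs_of_nonneg Rn.coe_nonneg, hRnr]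
    rw [habs]
    apply mul_le_mul_of_nonneg_right _ (by positivity)
    calc (2 * Real.pi)⁻¹ * ∫ θ in (0:ℝ)..2 * Real.pi, ‖g (circleMap 0 Rn θ)‖
        ≤ (2 * Real.pi)⁻¹ * (2 * Real.pi * K) := by
          apply mul_le_mul_of_nonneg_left hint
          positivity
      _ = K := by
          rw [← mul_assoc, inv_mul_cancel₀ Real.two_pi_pos.ne', one_mul]
  calc ‖HP P N‖
      = ‖FormalMultilinearSeries.ofScalars ℂ (fun N => HP P N) N‖ :=
        (FormalMultilinearSeries.ofScalars_norm ℂ (fun N => HP P N) N).symm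
    _ = ‖cauchyPowerSeries g 0 Rn N‖ := by rw [huniq]
    _ ≤ K * r⁻¹ ^ N := final
    _ = (1 - r)⁻¹ * C * r⁻¹ ^ N := by rw [hK]
lemma hasFPowerSeriesAt_of_forall (h : ℂ → ℂ) (c : ℕ → ℂ) {ρ : ℝ} (hρ : 0 < ρ)
    (hs : ∀ z : ℂ, ‖z‖ < ρ → HasSum (fun N : ℕ => c N * z ^ N) (h z)) :
    HasFPowerSeriesAt h (FormalMultilinearSeries.ofScalars ℂ c) 0 := by
  refine ⟨ENNReal.ofReal (ρ / 2), ?_, ?_, ?_⟩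
  · show (((ρ / 2).toNNReal : ℝ≥0) : ℝ≥0∞) ≤ _
    apply FormalMultilinearSeries.le_radius_of_tendsto (l := 0)
    have hz : ‖((ρ / 2 : ℝ) : ℂ)‖ < ρ := by
      rw [Complex.norm_real, Real.norm_eq_abs, abs_of_pos (by positivity)]
      linarith
    have h2 : Filter.Tendsto (fun N : ℕ => ‖c N * ((ρ / 2 : ℝ) : ℂ) ^ N‖)
        Filter.atTop (nhds 0) := by
      have := ((hs _ hz).summable.tendsto_atTop_zero).norm
      simpa using this
    refine h2.congr fun N => ?_
    rw [norm_mul, norm_pow, Complex.norm_real, Real.norm_eq_abs,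
      abs_of_pos (by positivity), FormalMultilinearSeries.ofScalars_norm,
      Real.coe_toNNReal _ (by positivity : (0:ℝ) ≤ ρ / 2)]
  · exact ENNReal.ofReal_pos.mpr (by positivity)
  · intro y hy
    rw [EMetric.mem_ball, edist_zero_right, ← ofReal_norm,
      ENNReal.ofReal_lt_ofReal_iff (by positivity)] at hy
    simp only [FormalMultilinearSeries.ofScalars_apply_eq, smul_eq_mul, zero_add]
    exact hs y (by linarith)

/-- Let `0 < R ≤ 1` and `(P_n)` finitely supported functions on compositions with
`Σ_n sup_{|z|≤r} |Li_{P_n}(z)| < ∞` for every `r ∈ (0,R)`, so that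
`f(z) = Σ_n Li_{P_n}(z)` is analytic on `|z| < R` with
`f(z)/(1−z) = Σ_N a_N z^N` there. Then for every `N`, `Σ_n H_{P_n}(N)` converges
absolutely with sum `a_N`. -/
theorem taylor_coeffs_of_li_family (R : ℝ) (hR0 : 0 < R) (hR1 : R ≤ 1)
    (P : ℕ → Comp → ℂ) (hfin : ∀ n : ℕ, (Function.support (P n)).Finite)
    (hdom : ∀ r : ℝ, 0 < r → r < R →
      (∑' n : ℕ, ⨆ z ∈ Metric.closedBall (0 : ℂ) r,
        (‖LiP (P n) z‖₊ : ℝ≥0∞)) < ⊤)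
    (a : ℕ → ℂ)
    (ha : ∀ z : ℂ, ‖z‖ < R →
      HasSum (fun N : ℕ => a N * z ^ N) ((∑' n : ℕ, LiP (P n) z) / (1 - z))) :
    ∀ N : ℕ, (Summable fun n : ℕ => ‖HP (P n) N‖) ∧
      ∑' n : ℕ, HP (P n) N = a N := by
  set r : ℝ := R / 2 with hrdef
  have hr0 : 0 < r := by positivity
  have hrR : r < R := by rw [hrdef]; linarith
  have hr1 : r < 1 := lt_of_lt_of_le hrR hR1
  have htop := hdom r hr0 hrR
  set Ms : ℕ → ℝ≥0∞ :=
    fun n => ⨆ z ∈ Metric.closedBall (0 : ℂ) r, (‖LiP (P n) z‖₊ : ℝ≥0∞) with hMs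
  have hMfin : ∀ n, Ms n ≠ ⊤ := fun n => ne_top_of_le_ne_top htop.ne (ENNReal.le_tsum n)
  set M : ℕ → ℝ := fun n => (Ms n).toReal with hM
  have hM0 : ∀ n, 0 ≤ M n := fun n => ENNReal.toReal_nonneg
  have hMsum : Summable M := ENNReal.summable_toReal htop.ne
  have hbound : ∀ (n : ℕ) (z : ℂ), ‖z‖ ≤ r → ‖LiP (P n) z‖ ≤ M n := by
    intro n z hz
    have hmem : z ∈ Metric.closedBall (0 : ℂ) r := by
      rwa [Metric.mem_closedBall, dist_zero_right]
    have h1 : (‖LiP (P n) z‖₊ : ℝ≥0∞) ≤ Ms n :=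
      le_biSup (fun z => (‖LiP (P n) z‖₊ : ℝ≥0∞)) hmem
    have h2 := ENNReal.toReal_mono (hMfin n) h1
    simpa using h2
  have hcoeff : ∀ n N : ℕ, ‖HP (P n) N‖ ≤ (1 - r)⁻¹ * M n * r⁻¹ ^ N :=
    fun n N => coeff_bound (P n) (hfin n) hr0 hr1 (hbound n) N
  have hsummN : ∀ N : ℕ, Summable fun n : ℕ => ‖HP (P n) N‖ := by
    intro N
    apply Summable.of_nonneg_of_le (fun n => norm_nonneg _) (fun n => hcoeff n N)
    exact (hMsum.mul_left ((1 - r)⁻¹)).mul_right (r⁻¹ ^ N)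
  have key : ∀ z : ℂ, ‖z‖ < r →
      HasSum (fun N : ℕ => (∑' n : ℕ, HP (P n) N) * z ^ N)
        ((∑' n : ℕ, LiP (P n) z) / (1 - z)) := by
    intro z hz
    have hz1 : ‖z‖ < 1 := hz.trans hr1
    set q : ℝ := ‖z‖ / r with hq
    have hq0 : 0 ≤ q := by positivity
    have hq1 : q < 1 := by rw [hq, div_lt_one hr0]; exact hz
    have h1r : (0:ℝ) < 1 - r := by linarith
    have hFs : Summable fun p : ℕ × ℕ => ‖HP (P p.1) p.2 * z ^ p.2‖ := by
      have hprod : Summable fun p : ℕ × ℕ => ((1 - r)⁻¹ * M p.1) * q ^ p.2 :=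
        Summable.mul_of_nonneg (hMsum.mul_left ((1 - r)⁻¹))
          (summable_geometric_of_lt_one hq0 hq1)
          (fun n => mul_nonneg (by positivity) (hM0 n))
          (fun N => pow_nonneg hq0 N)
      refine hprod.of_nonneg_of_le (fun p => norm_nonneg _) fun p => ?_
      rw [norm_mul, norm_pow]
      calc ‖HP (P p.1) p.2‖ * ‖z‖ ^ p.2
          ≤ ((1 - r)⁻¹ * M p.1 * r⁻¹ ^ p.2) * ‖z‖ ^ p.2 :=
            mul_le_mul_of_nonneg_right (hcoeff p.1 p.2) (by positivity)
        _ = ((1 - r)⁻¹ * M p.1) * q ^ p.2 := by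
            rw [hq, div_pow, div_eq_mul_inv, inv_pow]; ring
    have hF : Summable fun p : ℕ × ℕ => HP (P p.1) p.2 * z ^ p.2 := hFs.of_norm
    obtain ⟨S, hS⟩ := hF
    have hfib1 : ∀ n : ℕ, HasSum (fun N : ℕ => HP (P n) N * z ^ N)
        (LiP (P n) z * (1 - z)⁻¹) := fun n => hasSum_HP_mul (P n) (hfin n) hz1
    have h1 : HasSum (fun n : ℕ => LiP (P n) z * (1 - z)⁻¹) S :=
      hS.prod_fiberwise hfib1
    have hSval : S = (∑' n : ℕ, LiP (P n) z) * (1 - z)⁻¹ := by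
      rw [← h1.tsum_eq, tsum_mul_right]
    have hswap : HasSum
        ((fun p : ℕ × ℕ => HP (P p.1) p.2 * z ^ p.2) ∘ ⇑(Equiv.prodComm ℕ ℕ)) S :=
      ((Equiv.prodComm ℕ ℕ).hasSum_iff).mpr hS
    have hfib2 : ∀ N : ℕ, HasSum (fun n : ℕ => HP (P n) N * z ^ N)
        ((∑' n : ℕ, HP (P n) N) * z ^ N) := by
      intro N
      exact ((hsummN N).of_norm.hasSum).mul_right (z ^ N)
    have h2 : HasSum (fun N : ℕ => (∑' n : ℕ, HP (P n) N) * z ^ N) S :=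
      hswap.prod_fiberwise fun N => hfib2 N
    rw [hSval, ← div_eq_mul_inv] at h2
    exact h2
  have hleft : HasFPowerSeriesAt (fun z => (∑' n : ℕ, LiP (P n) z) / (1 - z))
      (FormalMultilinearSeries.ofScalars ℂ (fun N => ∑' n : ℕ, HP (P n) N)) 0 :=
    hasFPowerSeriesAt_of_forall _ _ hr0 key
  have hright : HasFPowerSeriesAt (fun z => (∑' n : ℕ, LiP (P n) z) / (1 - z))
      (FormalMultilinearSeries.ofScalars ℂ a) 0 :=
    hasFPowerSeriesAt_of_forall _ _ hR0 ha
  have heqp := hright.eq_formalMultilinearSeries hleft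
  have hac : a = fun N => ∑' n : ℕ, HP (P n) N :=
    FormalMultilinearSeries.ofScalars_series_injective ℂ ℂ heqp
  intro N
  exact ⟨hsummN N, (congrFun hac N).symm⟩
end

section
/- For every R ∈ (0,1], Dom_R is a unital shuffle subalgebra: the indicator function of the empty composition belongs to Dom_R; and if α, β ∈ Dom_R, then the shuffle product α ⧢ β belongs to Dom_R and Li_{α⧢β}(z) = Li_α(z)·Li_β(z) for all z ∈ ℂ with |z| < R, where Li_α(z) := Σ_{n≥0} Li_{α,n}(z). -/
open scoped NNReal ENNReal

/-- Shuffle coefficient on words over the alphabet `X = {x₀, x₁} ≃ Bool`: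
`⟨u ⧢ v, w⟩`. -/
def shufW : List Bool → List Bool → List Bool → ℕ
  | [], v, w => if w = v then 1 else 0
  | u, [], w => if w = u then 1 else 0
  | _ :: _, _ :: _, [] => 0
  | a :: u, b :: v, c :: w =>
      (if c = a then shufW u (b :: v) w else 0) +
      (if c = b then shufW (a :: u) v w else 0)
termination_by u v _ => u.length + v.length

/-- The word `π_X(s) = x₀^{s₁−1}x₁ ⋯ x₀^{s_r−1}x₁` (coding `x₀ = false`,
`x₁ = true`). -/
def piX : Comp → List Bool
  | [] => []
  | s :: u => List.replicate ((s : ℕ) - 1) false ++ true :: piX u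

/-- Shuffle coefficient transported to compositions:
`(u ⧢ v)(w) = (π_X(u) ⧢ π_X(v))(π_X(w))`. -/
def shufC (u v w : Comp) : ℕ := shufW (piX u) (piX v) (piX w)

/-- Bilinear extension of the shuffle to `ℂ`-valued functions on compositions
(a finite sum for each `w`, realized as a `tsum`). -/
noncomputable def shufA (α β : Comp → ℂ) : Comp → ℂ :=
  fun w => ∑' p : Comp × Comp, α p.1 * β p.2 * (shufC p.1 p.2 w : ℂ)

/-! ### Auxiliary development -/

namespace ShufAux

open Finset

/-- Coefficient sequence of the generating series attached to a word. -/
noncomputable def cw : List Bool → ℕ → ℂ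
  | [], n => if n = 0 then 1 else 0
  | false :: l, n => (n : ℂ)⁻¹ * cw l n
  | true :: l, n => (n : ℂ)⁻¹ * ∑ m ∈ Finset.range n, cw l m

lemma cw_zero {l : List Bool} (h : l ≠ []) : cw l 0 = 0 := by
  match l with
  | false :: l => simp [cw]
  | true :: l => simp [cw]

lemma mul_cw_false {u : List Bool} (h : u ≠ []) (k : ℕ) :
    (k : ℂ) * cw (false :: u) k = cw u k := by
  cases k with
  | zero => simp [cw_zero h]
  | succ m =>
    rw [cw, ← mul_assoc, mul_inv_cancel₀ (by exact_mod_cast Nat.succ_ne_zero m), one_mul]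

lemma mul_cw_true (u : List Bool) (k : ℕ) :
    (k : ℂ) * cw (true :: u) k = ∑ m ∈ Finset.range k, cw u m := by
  cases k with
  | zero => simp [cw]
  | succ m =>
    rw [cw, ← mul_assoc, mul_inv_cancel₀ (by exact_mod_cast Nat.succ_ne_zero m), one_mul]

/-- "step" operation on coefficient sequences, corresponding to prepending a letter. -/
noncomputable def stp : Bool → (ℕ → ℂ) → ℕ → ℂ
  | false, g, n => (n : ℂ)⁻¹ * g n
  | true, g, n => (n : ℂ)⁻¹ * ∑ m ∈ Finset.range n, g m

lemma cw_cons (c : Bool) (l : List Bool) (n : ℕ) : cw (c :: l) n = stp c (cw l) n := by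
  cases c <;> rfl

lemma stp_zero (c : Bool) (g : ℕ → ℂ) : stp c g 0 = 0 := by
  cases c <;> simp [stp]

lemma stp_sum (c : Bool) {ι : Type*} (S : Finset ι) (X : ι → ℂ) (h : ι → ℕ → ℂ) (n : ℕ) :
    ∑ w ∈ S, X w * stp c (h w) n = stp c (fun m => ∑ w ∈ S, X w * h w m) n := by
  cases c with
  | false =>
    simp only [stp, Finset.mul_sum]
    exact Finset.sum_congr rfl fun w _ => by ring
  | true =>
    simp only [stp, Finset.mul_sum]
    rw [Finset.sum_comm]
    exact Finset.sum_congr rfl fun m _ => Finset.sum_congr rfl fun w _ => by ring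

lemma mul_stp (c : Bool) (g : ℕ → ℂ) {n : ℕ} (hn : n ≠ 0) :
    (n : ℂ) * stp c g n = (if c then ∑ m ∈ Finset.range n, g m else g n) := by
  have hn' : (n : ℂ) ≠ 0 := Nat.cast_ne_zero.2 hn
  cases c <;> simp [stp, ← mul_assoc, mul_inv_cancel₀ hn']

/-! ### shufW equation lemmas and basic properties -/

lemma shufW_nil_left (v w : List Bool) : shufW [] v w = if w = v then 1 else 0 := by
  simp [shufW]

lemma shufW_nil_right (u w : List Bool) : shufW u [] w = if w = u then 1 else 0 := by
  cases u with
  | nil => simp [shufW]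
  | cons a u => simp [shufW]

lemma shufW_cons_nil (a b : Bool) (u v : List Bool) : shufW (a :: u) (b :: v) [] = 0 := by
  simp [shufW]

lemma shufW_cons_cons (a b c : Bool) (u v w : List Bool) :
    shufW (a :: u) (b :: v) (c :: w) =
      (if c = a then shufW u (b :: v) w else 0) +
      (if c = b then shufW (a :: u) v w else 0) := by
  rw [shufW]

lemma shufW_nil_nil {u v : List Bool} (h : shufW u v [] ≠ 0) : u = [] ∧ v = [] := by
  cases u with
  | nil =>
    rw [shufW_nil_left] at h
    refine ⟨rfl, ?_⟩
    by_contra hv; simp [Ne.symm hv] at h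
  | cons a u =>
    cases v with
    | nil => rw [shufW_nil_right] at h; simp at h
    | cons b v => rw [shufW_cons_nil] at h; simp at h

lemma shufW_cons_ne {a b c : Bool} {u v w : List Bool}
    (h : shufW (a :: u) (b :: v) (c :: w) ≠ 0) :
    (c = a ∧ shufW u (b :: v) w ≠ 0) ∨ (c = b ∧ shufW (a :: u) v w ≠ 0) := by
  rw [shufW_cons_cons] at h
  by_contra hc
  push_neg at hc
  obtain ⟨h1, h2⟩ := hc
  apply h
  have e1 : (if c = a then shufW u (b :: v) w else 0) = 0 := by
    split_ifs with hca
    · exact h1 hca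
    · rfl
  have e2 : (if c = b then shufW (a :: u) v w else 0) = 0 := by
    split_ifs with hcb
    · exact h2 hcb
    · rfl
  rw [e1, e2]

lemma shufW_length : ∀ (L : ℕ) (u v w : List Bool), u.length + v.length ≤ L →
    shufW u v w ≠ 0 → w.length = u.length + v.length := by
  intro L
  induction L with
  | zero =>
    intro u v w hL h
    obtain rfl : u = [] := List.eq_nil_of_length_eq_zero (by omega)
    obtain rfl : v = [] := List.eq_nil_of_length_eq_zero (by omega)
    rw [shufW_nil_left] at h
    rcases eq_or_ne w [] with rfl | hw
    · simp
    · simp [hw] at h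
  | succ L ih =>
    intro u v w hL h
    match u, v with
    | [], v =>
      rw [shufW_nil_left] at h
      rcases eq_or_ne w v with rfl | hw
      · simp
      · simp [hw] at h
    | u, [] =>
      rw [shufW_nil_right] at h
      rcases eq_or_ne w u with rfl | hw
      · simp
      · simp [hw] at h
    | a :: u, b :: v =>
      match w with
      | [] => rw [shufW_cons_nil] at h; simp at h
      | c :: w =>
        simp only [List.length_cons] at hL ⊢
        rcases shufW_cons_ne h with ⟨rfl, h0⟩ | ⟨rfl, h0⟩
        · have := ih u (b :: v) w (by simp only [List.length_cons]; omega) h0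
          simp only [List.length_cons] at this; omega
        · have := ih (a :: u) v w (by simp only [List.length_cons]; omega) h0
          simp only [List.length_cons] at this; omega

/-- A word is admissible if it does not end with `false`. -/
def EndT (l : List Bool) : Prop := l.getLast? ≠ some false

instance : DecidablePred EndT := fun l => by unfold EndT; infer_instance

lemma endT_nil : EndT [] := by simp [EndT]

lemma endT_tail {a : Bool} {l : List Bool} (h : EndT (a :: l)) : EndT l := by
  cases l with
  | nil => exact endT_nil
  | cons b l => rwa [EndT, ← List.getLast?_cons_cons (a := a)]

lemma endT_false_cons {l : List Bool} (h : EndT (false :: l)) : l ≠ [] := by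
  rintro rfl; simp [EndT] at h

lemma endT_cons_of {c : Bool} {l : List Bool} (hl : l ≠ []) (h : EndT l) : EndT (c :: l) := by
  cases l with
  | nil => exact absurd rfl hl
  | cons b l => rwa [EndT, List.getLast?_cons_cons]

lemma shufW_endT : ∀ (L : ℕ) (u v w : List Bool), u.length + v.length ≤ L →
    shufW u v w ≠ 0 → EndT u → EndT v → EndT w := by
  intro L
  induction L with
  | zero =>
    intro u v w hL h hu hv
    obtain rfl : u = [] := List.eq_nil_of_length_eq_zero (by omega)
    obtain rfl : v = [] := List.eq_nil_of_length_eq_zero (by omega)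
    rw [shufW_nil_left] at h
    rcases eq_or_ne w [] with rfl | hw
    · exact endT_nil
    · simp [hw] at h
  | succ L ih =>
    intro u v w hL h hu hv
    match u, v with
    | [], v =>
      rw [shufW_nil_left] at h
      rcases eq_or_ne w v with rfl | hw
      · exact hv
      · simp [hw] at h
    | u, [] =>
      rw [shufW_nil_right] at h
      rcases eq_or_ne w u with rfl | hw
      · exact hu
      · simp [hw] at h
    | a :: u, b :: v =>
      match w with
      | [] => rw [shufW_cons_nil] at h; simp at h
      | c :: w =>
        simp only [List.length_cons] at hL
        rcases shufW_cons_ne h with ⟨rfl, h0⟩ | ⟨rfl, h0⟩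
        · have hw' : EndT w :=
            ih u (b :: v) w (by simp only [List.length_cons]; omega) h0 (endT_tail hu) hv
          have hwne : w ≠ [] := by
            rintro rfl
            exact absurd (shufW_nil_nil h0).2 (by simp)
          exact endT_cons_of hwne hw'
        · have hw' : EndT w :=
            ih (a :: u) v w (by simp only [List.length_cons]; omega) h0 hu (endT_tail hv)
          have hwne : w ≠ [] := by
            rintro rfl
            exact absurd (shufW_nil_nil h0).1 (by simp)
          exact endT_cons_of hwne hw'

/-! ### The finset of words of a given length, and the shuffle sum `SW` -/

def WL (L : ℕ) : Finset (List Bool) :=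
  Finset.image (fun f : Fin L → Bool => List.ofFn f) Finset.univ

lemma mem_WL {L : ℕ} {l : List Bool} : l ∈ WL L ↔ l.length = L := by
  constructor
  · intro h
    simp only [WL, Finset.mem_image] at h
    obtain ⟨f, _, rfl⟩ := h
    simp
  · rintro rfl
    simp only [WL, Finset.mem_image]
    exact ⟨l.get, Finset.mem_univ _, List.ofFn_get l⟩

lemma WL_succ (L : ℕ) : WL (L + 1) =
    Finset.image (fun p : Bool × List Bool => p.1 :: p.2) (Finset.univ ×ˢ WL L) := by
  ext l
  simp only [mem_WL, Finset.mem_image, Finset.mem_product, Finset.mem_univ, true_and]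
  constructor
  · intro h
    cases l with
    | nil => exact absurd h (by simp)
    | cons a l' => exact ⟨(a, l'), by simpa using h, rfl⟩
  · rintro ⟨⟨a, l'⟩, h, rfl⟩
    simp only [List.length_cons]
    simp only at h
    omega

lemma sum_WL_succ (L : ℕ) (F : List Bool → ℂ) :
    ∑ w ∈ WL (L + 1), F w = (∑ w ∈ WL L, F (false :: w)) + ∑ w ∈ WL L, F (true :: w) := by
  rw [WL_succ, Finset.sum_image ?inj, Finset.sum_product]
  case inj =>
    rintro ⟨a, u⟩ - ⟨b, v⟩ - h
    rw [List.cons.injEq] at h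
    obtain ⟨rfl, rfl⟩ := h
    rfl
  rw [Fintype.sum_bool]
  exact add_comm _ _

/-- `SW u v n` is the `n`-th coefficient of the series attached to the shuffle `u ⧢ v`. -/
noncomputable def SW (u v : List Bool) (n : ℕ) : ℂ :=
  ∑ w ∈ WL (u.length + v.length), (shufW u v w : ℂ) * cw w n

lemma SW_nil_left (v : List Bool) (n : ℕ) : SW [] v n = cw v n := by
  rw [SW]
  simp only [List.length_nil, Nat.zero_add, shufW_nil_left]
  have h : ∀ w ∈ WL v.length, ((if w = v then 1 else 0 : ℕ) : ℂ) * cw w n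
      = if w = v then cw w n else 0 := fun w _ => by split_ifs <;> simp
  rw [Finset.sum_congr rfl h, Finset.sum_ite_eq' (WL v.length) v (fun w => cw w n),
    if_pos (mem_WL.2 rfl)]

lemma SW_nil_right (u : List Bool) (n : ℕ) : SW u [] n = cw u n := by
  rw [SW]
  simp only [List.length_nil, Nat.add_zero, shufW_nil_right]
  have h : ∀ w ∈ WL u.length, ((if w = u then 1 else 0 : ℕ) : ℂ) * cw w n
      = if w = u then cw w n else 0 := fun w _ => by split_ifs <;> simp
  rw [Finset.sum_congr rfl h, Finset.sum_ite_eq' (WL u.length) u (fun w => cw w n),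
    if_pos (mem_WL.2 rfl)]

lemma SW_cons (a b : Bool) (u v : List Bool) (n : ℕ) :
    SW (a :: u) (b :: v) n = stp a (SW u (b :: v)) n + stp b (SW (a :: u) v) n := by
  have hlen : (a :: u).length + (b :: v).length = (u.length + (b :: v).length) + 1 := by
    simp only [List.length_cons]; omega
  have e1 : ∀ c : Bool,
      (∑ w ∈ WL (u.length + (b :: v).length),
        (if c = a then (shufW u (b :: v) w : ℂ) else 0) * cw (c :: w) n)
      = if c = a then stp c (SW u (b :: v)) n else 0 := by
    intro c
    by_cases h : c = a
    · simp only [if_pos h]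
      calc ∑ w ∈ WL (u.length + (b :: v).length), (shufW u (b :: v) w : ℂ) * cw (c :: w) n
          = ∑ w ∈ WL (u.length + (b :: v).length), (shufW u (b :: v) w : ℂ) * stp c (cw w) n :=
            Finset.sum_congr rfl fun w _ => by rw [cw_cons]
        _ = stp c (SW u (b :: v)) n := stp_sum c _ _ _ n
    · simp only [if_neg h, zero_mul, Finset.sum_const_zero]
  have hlen2 : (a :: u).length + v.length = u.length + (b :: v).length := by
    simp only [List.length_cons]; omega
  have e2 : ∀ c : Bool,
      (∑ w ∈ WL (u.length + (b :: v).length),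
        (if c = b then (shufW (a :: u) v w : ℂ) else 0) * cw (c :: w) n)
      = if c = b then stp c (SW (a :: u) v) n else 0 := by
    intro c
    by_cases h : c = b
    · simp only [if_pos h]
      calc ∑ w ∈ WL (u.length + (b :: v).length), (shufW (a :: u) v w : ℂ) * cw (c :: w) n
          = ∑ w ∈ WL (u.length + (b :: v).length), (shufW (a :: u) v w : ℂ) * stp c (cw w) n :=
            Finset.sum_congr rfl fun w _ => by rw [cw_cons]
        _ = stp c (fun m => ∑ w ∈ WL (u.length + (b :: v).length),
              (shufW (a :: u) v w : ℂ) * cw w m) n := stp_sum c _ _ _ n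
        _ = stp c (SW (a :: u) v) n := by
              have hSW : SW (a :: u) v = fun m => ∑ w ∈ WL (u.length + (b :: v).length),
                  (shufW (a :: u) v w : ℂ) * cw w m := by
                funext m; rw [SW, hlen2]
              rw [hSW]
    · simp only [if_neg h, zero_mul, Finset.sum_const_zero]
  have expand : ∀ c : Bool,
      ∑ w ∈ WL (u.length + (b :: v).length), (shufW (a :: u) (b :: v) (c :: w) : ℂ) * cw (c :: w) n
      = (if c = a then stp c (SW u (b :: v)) n else 0)
        + (if c = b then stp c (SW (a :: u) v) n else 0) := by
    intro c
    rw [← e1 c, ← e2 c, ← Finset.sum_add_distrib]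
    refine Finset.sum_congr rfl fun w _ => ?_
    rw [shufW_cons_cons]
    split_ifs <;> push_cast <;> ring
  rw [SW, hlen, sum_WL_succ, expand false, expand true]
  cases a <;> cases b <;> simp <;> abel

/-! ### Reindexing lemmas for convolution sums -/

open Finset in
lemma conv_comm (p q : ℕ → ℂ) (m : ℕ) :
    ∑ j ∈ range (m + 1), p j * q (m - j) = ∑ j ∈ range (m + 1), q j * p (m - j) := by
  have h := Finset.sum_range_reflect (fun j => q j * p (m - j)) (m + 1)
  rw [← h]
  refine Finset.sum_congr rfl fun j hj => ?_
  simp only [Finset.mem_range] at hj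
  have e1 : m + 1 - 1 - j = m - j := by omega
  have e2 : m - (m - j) = j := by omega
  rw [e1, e2, mul_comm]

open Finset in
lemma reindex (f g : ℕ → ℂ) (n : ℕ) :
    ∑ k ∈ range (n + 1), (∑ m ∈ range k, f m) * g (n - k)
      = ∑ m ∈ range n, ∑ j ∈ range (m + 1), f j * g (m - j) := by
  have l1 : ∑ k ∈ range (n + 1), (∑ m ∈ range k, f m) * g (n - k)
      = ∑ p ∈ (range (n + 1)).sigma (fun k => range k), f p.2 * g (n - p.1) := by
    rw [← Finset.sum_sigma' (range (n + 1)) (fun k => range k) (fun k m => f m * g (n - k))]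
    exact Finset.sum_congr rfl fun k _ => Finset.sum_mul _ _ _
  have l2 : ∑ m ∈ range n, ∑ j ∈ range (m + 1), f j * g (m - j)
      = ∑ p ∈ (range n).sigma (fun m => range (m + 1)), f p.2 * g (p.1 - p.2) :=
    Finset.sum_sigma' (range n) (fun m => range (m + 1)) (fun m j => f j * g (m - j))
  rw [l1, l2]
  refine Finset.sum_nbij' (fun p => ⟨p.2 + (n - p.1), p.2⟩) (fun q => ⟨n - q.1 + q.2, q.2⟩)
    ?_ ?_ ?_ ?_ ?_
  · rintro ⟨k, m⟩ hp
    simp only [Finset.mem_sigma, Finset.mem_range] at hp ⊢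
    omega
  · rintro ⟨m, j⟩ hq
    simp only [Finset.mem_sigma, Finset.mem_range] at hq ⊢
    omega
  · rintro ⟨k, m⟩ hp
    simp only [Finset.mem_sigma, Finset.mem_range] at hp
    show (⟨n - (m + (n - k)) + m, m⟩ : Σ _ : ℕ, ℕ) = ⟨k, m⟩
    have h1 : n - (m + (n - k)) + m = k := by omega
    rw [h1]
  · rintro ⟨m, j⟩ hq
    simp only [Finset.mem_sigma, Finset.mem_range] at hq
    show (⟨j + (n - (n - m + j)), j⟩ : Σ _ : ℕ, ℕ) = ⟨m, j⟩
    have h1 : j + (n - (n - m + j)) = m := by omega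
    rw [h1]
  · rintro ⟨k, m⟩ hp
    simp only [Finset.mem_sigma, Finset.mem_range] at hp
    show f m * g (n - k) = f m * g (m + (n - k) - m)
    have e : m + (n - k) - m = n - k := by omega
    rw [e]

/-! ### The core shuffle identity on coefficients -/

open Finset in
lemma conv_nil_left (v : List Bool) (n : ℕ) :
    ∑ k ∈ range (n + 1), cw [] k * cw v (n - k) = SW [] v n := by
  rw [SW_nil_left]
  have h : ∀ k ∈ range (n + 1), cw [] k * cw v (n - k)
      = if k = 0 then cw v (n - k) else 0 := by
    intro k _
    rw [cw]
    split_ifs <;> simp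
  rw [Finset.sum_congr rfl h, Finset.sum_ite_eq' (range (n + 1)) 0 (fun k => cw v (n - k)),
    if_pos (by simp : (0 : ℕ) ∈ range (n + 1)), Nat.sub_zero]

open Finset in
lemma conv_nil_right (u : List Bool) (n : ℕ) :
    ∑ k ∈ range (n + 1), cw u k * cw [] (n - k) = SW u [] n := by
  rw [SW_nil_right]
  have h : ∀ k ∈ range (n + 1), cw u k * cw [] (n - k)
      = if k = n then cw u k else 0 := by
    intro k hk
    simp only [Finset.mem_range] at hk
    rw [cw]
    split_ifs <;> first | omega | simp
  rw [Finset.sum_congr rfl h, Finset.sum_ite_eq' (range (n + 1)) n (fun k => cw u k),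
    if_pos (by simp : n ∈ range (n + 1))]

open Finset in
lemma core : ∀ (L : ℕ) (u v : List Bool), u.length + v.length ≤ L → EndT u → EndT v →
    ∀ n : ℕ, ∑ k ∈ range (n + 1), cw u k * cw v (n - k) = SW u v n := by
  intro L
  induction L with
  | zero =>
    intro u v hL hu hv n
    obtain rfl : u = [] := List.eq_nil_of_length_eq_zero (by omega)
    exact conv_nil_left v n
  | succ L ih =>
    intro u v hL hu hv n
    match u, v with
    | [], v => exact conv_nil_left v n
    | u, [] => exact conv_nil_right u n
    | a :: u, b :: v =>
      simp only [List.length_cons] at hL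
      rw [SW_cons]
      cases n with
      | zero =>
        rw [stp_zero, stp_zero]
        simp [Finset.sum_range_one, cw_zero (List.cons_ne_nil a u)]
      | succ N =>
        have hn0 : (N + 1 : ℕ) ≠ 0 := Nat.succ_ne_zero N
        have hn : ((N + 1 : ℕ) : ℂ) ≠ 0 := by exact_mod_cast hn0
        apply mul_left_cancel₀ hn
        rw [Finset.mul_sum]
        have split : ∀ k ∈ range (N + 2),
            ((N + 1 : ℕ) : ℂ) * (cw (a :: u) k * cw (b :: v) (N + 1 - k))
            = (k : ℂ) * cw (a :: u) k * cw (b :: v) (N + 1 - k)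
              + cw (a :: u) k * (((N + 1 - k : ℕ) : ℂ) * cw (b :: v) (N + 1 - k)) := by
          intro k hk
          simp only [Finset.mem_range] at hk
          have e : ((k : ℂ) + ((N + 1 - k : ℕ) : ℂ)) = ((N + 1 : ℕ) : ℂ) := by
            have e' : k + (N + 1 - k) = N + 1 := by omega
            exact_mod_cast congrArg (fun x : ℕ => (x : ℂ)) e'
          rw [← e]
          ring
        rw [Finset.sum_congr rfl split, Finset.sum_add_distrib, mul_add,
          mul_stp _ _ hn0, mul_stp _ _ hn0]
        congr 1
        · -- first piece
          cases a with
          | false =>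
            have hne : u ≠ [] := endT_false_cons hu
            have h1 : ∀ k ∈ range (N + 2),
                (k : ℂ) * cw (false :: u) k * cw (b :: v) (N + 1 - k)
                = cw u k * cw (b :: v) (N + 1 - k) := fun k _ => by
              rw [mul_cw_false hne]
            rw [Finset.sum_congr rfl h1]
            simp only [Bool.false_eq_true, if_false]
            exact ih u (b :: v) (by simp only [List.length_cons]; omega) (endT_tail hu) hv (N + 1)
          | true =>
            have h1 : ∀ k ∈ range (N + 2),
                (k : ℂ) * cw (true :: u) k * cw (b :: v) (N + 1 - k)
                = (∑ m ∈ range k, cw u m) * cw (b :: v) (N + 1 - k) := fun k _ => by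
              rw [mul_cw_true]
            rw [Finset.sum_congr rfl h1, reindex, if_pos rfl]
            exact Finset.sum_congr rfl fun m _ =>
              ih u (b :: v) (by simp only [List.length_cons]; omega) (endT_tail hu) hv m
        · -- second piece
          cases b with
          | false =>
            have hne : v ≠ [] := endT_false_cons hv
            have h1 : ∀ k ∈ range (N + 2),
                cw (a :: u) k * (((N + 1 - k : ℕ) : ℂ) * cw (false :: v) (N + 1 - k))
                = cw (a :: u) k * cw v (N + 1 - k) := fun k _ => by
              rw [mul_cw_false hne]
            rw [Finset.sum_congr rfl h1]
            simp only [Bool.false_eq_true, if_false]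
            exact ih (a :: u) v (by simp only [List.length_cons]; omega) hu (endT_tail hv) (N + 1)
          | true =>
            have h1 : ∀ k ∈ range (N + 2),
                cw (a :: u) k * (((N + 1 - k : ℕ) : ℂ) * cw (true :: v) (N + 1 - k))
                = (∑ m ∈ range (N + 1 - k), cw v m) * cw (a :: u) (N + 1 - (N + 1 - k)) := by
              intro k hk
              simp only [Finset.mem_range] at hk
              rw [mul_cw_true]
              have e : N + 1 - (N + 1 - k) = k := by omega
              rw [e, mul_comm]
            rw [Finset.sum_congr rfl h1]
            have refl := Finset.sum_range_reflect
              (fun k => (∑ m ∈ range k, cw v m) * cw (a :: u) (N + 1 - k)) (N + 2)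
            have h2 : ∀ k ∈ range (N + 2),
                (∑ m ∈ range (N + 1 - k), cw v m) * cw (a :: u) (N + 1 - (N + 1 - k))
                = (fun k => (∑ m ∈ range k, cw v m) * cw (a :: u) (N + 1 - k)) (N + 2 - 1 - k) := by
              intro k hk
              have e : N + 2 - 1 - k = N + 1 - k := by omega
              rw [e]
            rw [Finset.sum_congr rfl h2, refl, reindex, if_pos rfl]
            refine Finset.sum_congr rfl fun m _ => ?_
            rw [conv_comm]
            exact ih (a :: u) v (by simp only [List.length_cons]; omega) hu (endT_tail hv) m

/-! ### Decoding words into compositions -/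

def dec : List Bool → Comp
  | [] => []
  | true :: l => 1 :: dec l
  | false :: l =>
    match dec l with
    | [] => []
    | s :: u => (s + 1) :: u

lemma piX_cons (s : ℕ+) (u : Comp) :
    piX (s :: u) = List.replicate ((s : ℕ) - 1) false ++ true :: piX u := rfl

lemma piX_ne_nil (s : ℕ+) (u : Comp) : piX (s :: u) ≠ [] := by
  rw [piX_cons]
  intro h
  exact absurd (congrArg List.length h) (by simp)

lemma wt_nil : wt ([] : Comp) = 0 := rfl

lemma wt_cons (s : ℕ+) (u : Comp) : wt (s :: u) = (s : ℕ) + wt u := rfl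

lemma length_piX (u : Comp) : (piX u).length = wt u := by
  induction u with
  | nil => rfl
  | cons s u ih =>
    rw [piX_cons, wt_cons]
    simp only [List.length_append, List.length_replicate, List.length_cons, ih]
    have := s.pos
    omega

lemma dec_rep : ∀ (k : ℕ) (l : List Bool),
    dec (List.replicate k false ++ true :: l) = (⟨k + 1, Nat.succ_pos k⟩ : ℕ+) :: dec l := by
  intro k
  induction k with
  | zero =>
    intro l
    rfl
  | succ k ih =>
    intro l
    rw [List.replicate_succ, List.cons_append, dec, ih]
    rfl

lemma dec_piX (u : Comp) : dec (piX u) = u := by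
  induction u with
  | nil => rfl
  | cons s u ih =>
    rw [piX_cons, dec_rep, ih]
    congr 1
    have h1 : (s : ℕ) - 1 + 1 = (s : ℕ) := by have := s.pos; omega
    exact PNat.coe_injective (by rw [PNat.mk_coe]; exact h1)

lemma endT_piX (u : Comp) : EndT (piX u) := by
  induction u with
  | nil => exact endT_nil
  | cons s u ih =>
    rw [piX_cons, EndT, List.getLast?_append]
    cases hp : piX u with
    | nil => simp [hp]
    | cons c l =>
      rw [EndT, hp] at ih
      rw [List.getLast?_cons_cons]
      cases hlast : (c :: l).getLast? with
      | none => simp [List.getLast?_eq_none_iff] at hlast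
      | some x =>
        rw [hlast] at ih
        simpa using ih

lemma dec_ne_nil : ∀ l : List Bool, l ≠ [] → EndT l → dec l ≠ [] := by
  intro l
  induction l with
  | nil => intro h; exact absurd rfl h
  | cons c l ih =>
    intro _ hE
    cases c with
    | true => simp [dec]
    | false =>
      have hl : l ≠ [] := endT_false_cons hE
      have : dec l ≠ [] := ih hl (endT_tail hE)
      rw [dec]
      cases h : dec l with
      | nil => exact absurd h this
      | cons s u => simp

lemma piX_dec : ∀ l : List Bool, EndT l → piX (dec l) = l := by
  intro l
  induction l with
  | nil => intro _; rfl
  | cons c l ih =>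
    intro hE
    have ih' := ih (endT_tail hE)
    cases c with
    | true =>
      rw [dec, piX_cons, ih']
      simp
    | false =>
      have hl : l ≠ [] := endT_false_cons hE
      have hd : dec l ≠ [] := dec_ne_nil l hl (endT_tail hE)
      rw [dec]
      cases h : dec l with
      | nil => exact absurd h hd
      | cons s u =>
        rw [piX_cons]
        have e1 : ((s + 1 : ℕ+) : ℕ) - 1 = (s : ℕ) := by
          simp [PNat.add_coe]
        rw [e1]
        have e2 : (s : ℕ) = ((s : ℕ) - 1) + 1 := by
          have := s.pos; omega
        rw [e2, List.replicate_succ, List.cons_append]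
        rw [h] at ih'
        rw [piX_cons] at ih'
        rw [ih']

/-! ### Coefficients of `LiC` -/

lemma cw_rep (k : ℕ) (l : List Bool) (n : ℕ) :
    cw (List.replicate k false ++ l) n = ((n : ℂ) ^ k)⁻¹ * cw l n := by
  induction k with
  | zero => simp
  | succ k ih =>
    rw [List.replicate_succ, List.cons_append, cw, ih, pow_succ, mul_inv]
    ring

lemma cw_piX_cons (s : ℕ+) (u : Comp)
    (hu : ∀ N, Hc u N = ∑ n ∈ Finset.range (N + 1), cw (piX u) n) (n : ℕ) :
    cw (piX (s :: u)) n = ((n : ℂ) ^ (s : ℕ))⁻¹ * Hc u (n - 1) := by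
  rw [piX_cons, cw_rep, cw]
  cases n with
  | zero =>
    simp [zero_pow s.pos.ne']
  | succ m =>
    have e : m + 1 - 1 = m := rfl
    rw [e, hu m]
    have hm : ((m + 1 : ℕ) : ℂ) ≠ 0 := by exact_mod_cast Nat.succ_ne_zero m
    have e2 : (((m + 1 : ℕ) : ℂ) ^ ((s : ℕ) - 1))⁻¹ * ((m + 1 : ℕ) : ℂ)⁻¹
        = (((m + 1 : ℕ) : ℂ) ^ (s : ℕ))⁻¹ := by
      rw [← mul_inv, ← pow_succ]
      congr 2
      have := s.pos
      omega
    rw [← mul_assoc, e2]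

/-! ### `Hc` and `LiC` via `cw` -/

open Finset in
lemma Hc_eq : ∀ (u : Comp) (N : ℕ), Hc u N = ∑ n ∈ Finset.range (N + 1), cw (piX u) n := by
  intro u
  induction u with
  | nil =>
    intro N
    have h : ∀ n ∈ range (N + 1), cw (piX []) n = if n = 0 then (1 : ℂ) else 0 :=
      fun n _ => rfl
    rw [Finset.sum_congr rfl h, Finset.sum_ite_eq' (range (N + 1)) 0 (fun _ => (1 : ℂ)),
      if_pos (by simp : (0 : ℕ) ∈ range (N + 1))]
    rfl
  | cons s u ih =>
    intro N
    have hset : range (N + 1) = insert 0 (Finset.Icc 1 N) := by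
      ext x; simp; omega
    rw [hset, Finset.sum_insert (by simp), cw_zero (piX_ne_nil s u), zero_add]
    have h : ∀ n ∈ Finset.Icc 1 N, cw (piX (s :: u)) n = ((n : ℂ) ^ (s : ℕ))⁻¹ * Hc u (n - 1) :=
      fun n _ => cw_piX_cons s u ih n
    rw [Finset.sum_congr rfl h]
    rfl

lemma LiC_tsum (u : Comp) (z : ℂ) : LiC u z = ∑' n : ℕ, cw (piX u) n * z ^ n := by
  cases u with
  | nil =>
    have h : (∑' n : ℕ, cw (piX []) n * z ^ n) = 1 := by
      rw [tsum_eq_single 0 ?_]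
      · simp [cw, piX]
      · intro n hn
        have : cw (piX []) n = 0 := by simp [cw, piX, hn]
        rw [this, zero_mul]
    rw [h]
    rfl
  | cons s u =>
    have h : ∀ n : ℕ, z ^ n * ((n : ℂ) ^ (s : ℕ))⁻¹ * Hc u (n - 1)
        = cw (piX (s :: u)) n * z ^ n := by
      intro n
      rw [cw_piX_cons s u (Hc_eq u)]
      ring
    exact (tsum_congr h : LiC (s :: u) z = _)

/-! ### Norm bounds and summability -/

lemma norm_natCast_inv_le_one (n : ℕ) : ‖((n : ℂ))⁻¹‖ ≤ 1 := by
  cases n with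
  | zero => simp
  | succ m =>
    rw [norm_inv, RCLike.norm_natCast]
    apply inv_le_one_of_one_le₀
    exact_mod_cast Nat.succ_le_succ (Nat.zero_le m)

lemma cw_norm_le : ∀ (l : List Bool) (n : ℕ), ‖cw l n‖ ≤ ((n : ℝ) + 1) ^ l.length := by
  intro l
  induction l with
  | nil =>
    intro n
    cases n with
    | zero => simp [cw]
    | succ m =>
      rw [show cw [] (m + 1) = 0 from by simp [cw]]
      simp
  | cons c l ih =>
    intro n
    have hb : (0 : ℝ) ≤ (n : ℝ) + 1 := by positivity
    cases c with
    | false =>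
      rw [show cw (false :: l) n = (n : ℂ)⁻¹ * cw l n from rfl, norm_mul, List.length_cons,
        pow_succ]
      calc ‖((n : ℂ))⁻¹‖ * ‖cw l n‖ ≤ 1 * ((n : ℝ) + 1) ^ l.length :=
            mul_le_mul (norm_natCast_inv_le_one n) (ih n) (norm_nonneg _) zero_le_one
        _ = ((n : ℝ) + 1) ^ l.length * 1 := by ring
        _ ≤ ((n : ℝ) + 1) ^ l.length * ((n : ℝ) + 1) := by
            apply mul_le_mul_of_nonneg_left (by linarith) (by positivity)
    | true =>
      rw [show cw (true :: l) n = (n : ℂ)⁻¹ * ∑ m ∈ Finset.range n, cw l m from rfl, norm_mul,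
        List.length_cons, pow_succ]
      have h1 : ‖∑ m ∈ Finset.range n, cw l m‖ ≤ (n : ℝ) * ((n : ℝ) + 1) ^ l.length := by
        calc ‖∑ m ∈ Finset.range n, cw l m‖ ≤ ∑ m ∈ Finset.range n, ‖cw l m‖ :=
              norm_sum_le _ _
          _ ≤ ∑ m ∈ Finset.range n, ((n : ℝ) + 1) ^ l.length := by
              apply Finset.sum_le_sum
              intro m hm
              refine le_trans (ih m) ?_
              apply pow_le_pow_left₀ (by positivity)
              have := Finset.mem_range.1 hm
              have : (m : ℝ) ≤ (n : ℝ) := by exact_mod_cast this.le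
              linarith
          _ = (n : ℝ) * ((n : ℝ) + 1) ^ l.length := by
              rw [Finset.sum_const, Finset.card_range, nsmul_eq_mul]
      calc ‖((n : ℂ))⁻¹‖ * ‖∑ m ∈ Finset.range n, cw l m‖
          ≤ 1 * ((n : ℝ) * ((n : ℝ) + 1) ^ l.length) :=
            mul_le_mul (norm_natCast_inv_le_one n) h1 (norm_nonneg _) zero_le_one
        _ = ((n : ℝ) + 1) ^ l.length * (n : ℝ) := by ring
        _ ≤ ((n : ℝ) + 1) ^ l.length * ((n : ℝ) + 1) := by
            apply mul_le_mul_of_nonneg_left (by linarith) (by positivity)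

lemma summable_aux (d : ℕ) {r : ℝ} (h0 : 0 ≤ r) (h1 : r < 1) :
    Summable (fun n : ℕ => ((n : ℝ) + 1) ^ d * r ^ n) := by
  rcases eq_or_lt_of_le h0 with rfl | hr
  · apply summable_of_ne_finset_zero (s := {0})
    intro n hn
    have hn' : n ≠ 0 := by simpa using hn
    rw [zero_pow hn', mul_zero]
  · have S := summable_pow_mul_geometric_of_norm_lt_one (R := ℝ) d
      (by rwa [Real.norm_eq_abs, abs_of_nonneg h0])
    have S2 : Summable (fun n : ℕ => (((n + 1 : ℕ)) : ℝ) ^ d * r ^ (n + 1)) :=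
      (summable_nat_add_iff 1).2 S
    have S3 := S2.mul_left r⁻¹
    refine S3.congr fun n => ?_
    have hr' : r ≠ 0 := ne_of_gt hr
    rw [pow_succ]
    push_cast
    field_simp

lemma summable_cw_norm (l : List Bool) {z : ℂ} (hz : ‖z‖ < 1) :
    Summable (fun n => ‖cw l n * z ^ n‖) := by
  apply Summable.of_nonneg_of_le (fun n => norm_nonneg _) ?_
    (summable_aux l.length (norm_nonneg z) hz)
  intro n
  rw [norm_mul, norm_pow]
  exact mul_le_mul_of_nonneg_right (cw_norm_le l n) (by positivity)

lemma summable_cw (l : List Bool) {z : ℂ} (hz : ‖z‖ < 1) :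
    Summable (fun n => cw l n * z ^ n) :=
  (summable_cw_norm l hz).of_norm

/-! ### The finset of compositions of given weight; the shuffle relation for `LiC` -/

/-- The finset of compositions of weight `n`. -/
def CF (n : ℕ) : Finset Comp := ((WL n).filter (fun l => EndT l)).image dec

lemma mem_CF {n : ℕ} {w : Comp} : w ∈ CF n ↔ wt w = n := by
  constructor
  · intro h
    simp only [CF, Finset.mem_image, Finset.mem_filter] at h
    obtain ⟨l, ⟨hl, hE⟩, rfl⟩ := h
    rw [← length_piX, piX_dec l hE]
    exact mem_WL.1 hl
  · intro h
    simp only [CF, Finset.mem_image, Finset.mem_filter]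
    exact ⟨piX w, ⟨mem_WL.2 (by rw [length_piX, h]), endT_piX w⟩, dec_piX w⟩

lemma shufC_wt {u v w : Comp} (h : shufC u v w ≠ 0) : wt u + wt v = wt w := by
  have := shufW_length ((piX u).length + (piX v).length) (piX u) (piX v) (piX w) le_rfl h
  rw [length_piX, length_piX, length_piX] at this
  omega

open Finset in
theorem LiC_shuffle (u v : Comp) {z : ℂ} (hz : ‖z‖ < 1) :
    LiC u z * LiC v z = ∑ w ∈ CF (wt u + wt v), (shufC u v w : ℂ) * LiC w z := by
  set pu := piX u with hpu
  set pv := piX v with hpv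
  set L := pu.length + pv.length with hL
  have hLwt : L = wt u + wt v := by rw [hL, length_piX, length_piX]
  -- Cauchy product
  rw [LiC_tsum u z, LiC_tsum v z,
    tsum_mul_tsum_eq_tsum_sum_antidiagonal_of_summable_norm
      (summable_cw_norm pu hz) (summable_cw_norm pv hz)]
  -- identify the n-th coefficient
  have step1 : ∀ n : ℕ,
      ∑ kl ∈ Finset.HasAntidiagonal.antidiagonal n, (cw pu kl.1 * z ^ kl.1) * (cw pv kl.2 * z ^ kl.2)
      = SW pu pv n * z ^ n := by
    intro n
    rw [Finset.Nat.sum_antidiagonal_eq_sum_range_succ_mk]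
    have h1 : ∀ k ∈ range (n + 1),
        (cw pu k * z ^ k) * (cw pv (n - k) * z ^ (n - k))
        = (cw pu k * cw pv (n - k)) * z ^ n := by
      intro k hk
      have hk' : k ≤ n := by simpa [Nat.lt_succ_iff] using Finset.mem_range.1 hk
      have : z ^ k * z ^ (n - k) = z ^ n := by
        rw [← pow_add]
        congr 1
        omega
      calc (cw pu k * z ^ k) * (cw pv (n - k) * z ^ (n - k))
          = (cw pu k * cw pv (n - k)) * (z ^ k * z ^ (n - k)) := by ring
        _ = (cw pu k * cw pv (n - k)) * z ^ n := by rw [this]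
    rw [Finset.sum_congr rfl h1, ← Finset.sum_mul,
      core L pu pv le_rfl (endT_piX u) (endT_piX v) n]
  rw [tsum_congr step1]
  -- exchange the finite sum over words with the tsum over n
  have step2 : ∀ n : ℕ, SW pu pv n * z ^ n
      = ∑ w ∈ WL L, (shufW pu pv w : ℂ) * (cw w n * z ^ n) := by
    intro n
    rw [SW, Finset.sum_mul]
    exact Finset.sum_congr rfl fun w _ => by ring
  rw [tsum_congr step2, Summable.tsum_finsetSum (fun w _ => (summable_cw w hz).mul_left _)]
  have step3 : ∀ w ∈ WL L, (shufW pu pv w : ℂ) * ∑' n : ℕ, cw w n * z ^ n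
      = ∑' n : ℕ, (shufW pu pv w : ℂ) * (cw w n * z ^ n) := fun w _ => (tsum_mul_left).symm
  rw [← Finset.sum_congr rfl step3]
  -- restrict to admissible words
  rw [← Finset.sum_filter_of_ne (p := fun l => EndT l)
    (fun w hw hne => shufW_endT L pu pv w le_rfl
      (fun h0 => hne (by rw [h0]; simp)) (endT_piX u) (endT_piX v))]
  -- transport along `dec`
  rw [← hLwt, CF, Finset.sum_image ?hinj]
  case hinj =>
    intro x hx y hy hxy
    simp only [Finset.mem_coe, Finset.mem_filter] at hx hy
    rw [← piX_dec x hx.2, ← piX_dec y hy.2, hxy]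
  have key : ∀ l : List Bool, EndT l →
      (shufC u v (dec l) : ℂ) * LiC (dec l) z
        = (shufW pu pv l : ℂ) * ∑' n : ℕ, cw l n * z ^ n := by
    intro l hE
    rw [LiC_tsum, shufC, piX_dec l hE]
  refine Finset.sum_congr rfl fun l hl => ?_
  simp only [Finset.mem_filter] at hl
  exact (key l hl.2).symm

/-! ### `LiP` of homogeneous components as finite sums -/

lemma LiP_homog_eq (α : Comp → ℂ) (n : ℕ) (z : ℂ) :
    LiP (homog α n) z = ∑ s ∈ CF n, α s * LiC s z := by
  rw [LiP, tsum_eq_sum (s := CF n) ?h0]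
  · refine Finset.sum_congr rfl fun s hs => ?_
    rw [homog, if_pos (mem_CF.1 hs)]
  · intro s hs
    rw [homog, if_neg (fun h => hs (mem_CF.2 h)), zero_mul]

/-- The finset of pairs of compositions whose weights sum to `n`. -/
def PF (n : ℕ) : Finset (Comp × Comp) :=
  (Finset.HasAntidiagonal.antidiagonal n).biUnion (fun ij => CF ij.1 ×ˢ CF ij.2)

lemma mem_PF {n : ℕ} {p : Comp × Comp} : p ∈ PF n ↔ wt p.1 + wt p.2 = n := by
  simp only [PF, Finset.mem_biUnion, Finset.mem_product, Finset.HasAntidiagonal.mem_antidiagonal, mem_CF]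
  constructor
  · rintro ⟨⟨i, j⟩, hij, h1, h2⟩
    simp only at h1 h2
    omega
  · intro h
    exact ⟨(wt p.1, wt p.2), h, rfl, rfl⟩

lemma shufA_eq (α β : Comp → ℂ) (w : Comp) :
    shufA α β w = ∑ p ∈ PF (wt w), α p.1 * β p.2 * (shufC p.1 p.2 w : ℂ) := by
  rw [shufA, tsum_eq_sum (s := PF (wt w))]
  intro p hp
  rcases eq_or_ne (shufC p.1 p.2 w) 0 with h | h
  · rw [h, Nat.cast_zero, mul_zero]
  · exact absurd (mem_PF.2 (shufC_wt h)) hp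

open Finset in
theorem homog_mul (α β : Comp → ℂ) (n : ℕ) {z : ℂ} (hz : ‖z‖ < 1) :
    LiP (homog (shufA α β) n) z
      = ∑ ij ∈ Finset.HasAntidiagonal.antidiagonal n, LiP (homog α ij.1) z * LiP (homog β ij.2) z := by
  rw [LiP_homog_eq]
  have e1 : ∀ w ∈ CF n, shufA α β w * LiC w z
      = ∑ p ∈ PF n, α p.1 * β p.2 * (shufC p.1 p.2 w : ℂ) * LiC w z := by
    intro w hw
    rw [shufA_eq, mem_CF.1 hw, Finset.sum_mul]
  rw [Finset.sum_congr rfl e1, Finset.sum_comm]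
  have e2 : ∀ p ∈ PF n, ∑ w ∈ CF n, α p.1 * β p.2 * (shufC p.1 p.2 w : ℂ) * LiC w z
      = (α p.1 * LiC p.1 z) * (β p.2 * LiC p.2 z) := by
    intro p hp
    have hwt : wt p.1 + wt p.2 = n := mem_PF.1 hp
    have : ∑ w ∈ CF n, α p.1 * β p.2 * (shufC p.1 p.2 w : ℂ) * LiC w z
        = (α p.1 * β p.2) * ∑ w ∈ CF n, (shufC p.1 p.2 w : ℂ) * LiC w z := by
      rw [Finset.mul_sum]
      exact Finset.sum_congr rfl fun w _ => by ring
    rw [this, ← hwt, ← LiC_shuffle p.1 p.2 hz]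
    ring
  rw [Finset.sum_congr rfl e2, PF, Finset.sum_biUnion ?hdisj]
  case hdisj =>
    intro x hx y hy hxy
    simp only [Function.onFun]
    refine Finset.disjoint_left.2 fun p hp1 hp2 => hxy ?_
    obtain ⟨x1, x2⟩ := x
    obtain ⟨y1, y2⟩ := y
    simp only [Finset.mem_product, mem_CF] at hp1 hp2
    have h1 : x1 = y1 := by omega
    have h2 : x2 = y2 := by omega
    rw [h1, h2]
  refine Finset.sum_congr rfl fun ij _ => ?_
  rw [Finset.sum_product, LiP_homog_eq, LiP_homog_eq, Finset.sum_mul_sum]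

/-! ### An `ℝ≥0∞` Cauchy-product computation -/

lemma tsum_antidiag (a b : ℕ → ℝ≥0∞) :
    ∑' n : ℕ, ∑ ij ∈ Finset.HasAntidiagonal.antidiagonal n, a ij.1 * b ij.2
      = (∑' n, a n) * (∑' n, b n) := by
  have h1 : ∀ n : ℕ, (∑ ij ∈ Finset.HasAntidiagonal.antidiagonal n, a ij.1 * b ij.2)
      = ∑' ij : (Finset.HasAntidiagonal.antidiagonal n : Finset (ℕ × ℕ)), a (ij : ℕ × ℕ).1 * b (ij : ℕ × ℕ).2 :=
    fun n => (Finset.tsum_subtype (Finset.HasAntidiagonal.antidiagonal n) (fun ij => a ij.1 * b ij.2)).symm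
  rw [tsum_congr h1,
    ← ENNReal.tsum_sigma' (fun q : (Σ n : ℕ, (Finset.HasAntidiagonal.antidiagonal n : Finset (ℕ × ℕ))) =>
        a (q.2 : ℕ × ℕ).1 * b (q.2 : ℕ × ℕ).2)]
  have h2 : ∑' q : (Σ n : ℕ, (Finset.HasAntidiagonal.antidiagonal n : Finset (ℕ × ℕ))),
      a (q.2 : ℕ × ℕ).1 * b (q.2 : ℕ × ℕ).2 = ∑' p : ℕ × ℕ, a p.1 * b p.2 :=
    Finset.HasAntidiagonal.sigmaAntidiagonalEquivProd.tsum_eq (fun p : ℕ × ℕ => a p.1 * b p.2)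
  rw [h2, ENNReal.tsum_prod']
  calc ∑' (i : ℕ) (j : ℕ), a i * b j = ∑' i : ℕ, a i * ∑' j : ℕ, b j := by
        exact tsum_congr fun i => ENNReal.tsum_mul_left
    _ = (∑' n, a n) * (∑' n, b n) := ENNReal.tsum_mul_right

end ShufAux
/-- For every `R ∈ (0,1]`, `Dom_R` is a unital shuffle subalgebra: the indicator
of the empty composition lies in `Dom_R`, and for `α, β ∈ Dom_R` one has
`α ⧢ β ∈ Dom_R` and `Li_{α⧢β}(z) = Li_α(z)·Li_β(z)` for `|z| < R`. -/
theorem domR_shuffle_subalgebra (R : ℝ) (hR0 : 0 < R) (hR1 : R ≤ 1) :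
    ((fun s : Comp => if s = [] then (1 : ℂ) else 0) ∈ DomR R) ∧
    ∀ α β : Comp → ℂ, α ∈ DomR R → β ∈ DomR R →
      shufA α β ∈ DomR R ∧
      ∀ z : ℂ, ‖z‖ < R →
        (∑' n : ℕ, LiP (homog (shufA α β) n) z) =
          (∑' n : ℕ, LiP (homog α n) z) * (∑' n : ℕ, LiP (homog β n) z) := by
  constructor
  · -- the unit
    intro r hr hrR
    set α₀ : Comp → ℂ := fun s : Comp => if s = [] then (1 : ℂ) else 0 with hα₀
    have h0 : ∀ z : ℂ, LiP (homog α₀ 0) z = 1 := by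
      intro z
      rw [ShufAux.LiP_homog_eq]
      have hCF0 : ShufAux.CF 0 = {([] : Comp)} := by
        ext w
        simp only [ShufAux.mem_CF, Finset.mem_singleton]
        constructor
        · intro h
          cases w with
          | nil => rfl
          | cons s u =>
            rw [ShufAux.wt_cons] at h
            have := s.pos
            omega
        · rintro rfl
          rfl
      rw [hCF0, Finset.sum_singleton]
      show (if ([] : Comp) = [] then (1 : ℂ) else 0) * LiC [] z = 1
      rw [if_pos rfl, one_mul]
      rfl
    have h1 : ∀ n : ℕ, n ≠ 0 → ∀ z : ℂ, LiP (homog α₀ n) z = 0 := by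
      intro n hn z
      rw [ShufAux.LiP_homog_eq]
      refine Finset.sum_eq_zero fun w hw => ?_
      have hwne : w ≠ [] := by
        intro h
        subst h
        exact hn ((ShufAux.mem_CF.1 hw).symm.trans rfl)
      show (if w = [] then (1 : ℂ) else 0) * LiC w z = 0
      rw [if_neg hwne, zero_mul]
    have hsup : ∀ n : ℕ,
        (⨆ z ∈ Metric.closedBall (0 : ℂ) r, (‖LiP (homog α₀ n) z‖₊ : ℝ≥0∞))
          = if n = 0 then 1 else 0 := by
      intro n
      rcases eq_or_ne n 0 with rfl | hn
      · rw [if_pos rfl]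
        apply le_antisymm
        · refine iSup₂_le fun z hz => ?_
          rw [h0 z]
          simp
        · have := le_iSup₂ (f := fun (z : ℂ) (_ : z ∈ Metric.closedBall (0 : ℂ) r) =>
            (‖LiP (homog α₀ 0) z‖₊ : ℝ≥0∞)) (0 : ℂ) (Metric.mem_closedBall_self hr.le)
          rw [h0 0] at this
          simpa using this
      · rw [if_neg hn]
        refine le_antisymm (iSup₂_le fun z hz => ?_) zero_le
        rw [h1 n hn z]
        simp
    rw [tsum_congr hsup, tsum_eq_single 0 (fun n hn => if_neg hn), if_pos rfl]
    exact ENNReal.one_lt_top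
  · intro α β hα hβ
    constructor
    · -- closure under shuffle
      intro r hr hrR
      have hr1 : r < 1 := lt_of_lt_of_le hrR hR1
      have hbound : ∀ n : ℕ,
          (⨆ z ∈ Metric.closedBall (0 : ℂ) r, (‖LiP (homog (shufA α β) n) z‖₊ : ℝ≥0∞))
          ≤ ∑ ij ∈ Finset.HasAntidiagonal.antidiagonal n,
              (⨆ z ∈ Metric.closedBall (0 : ℂ) r, (‖LiP (homog α ij.1) z‖₊ : ℝ≥0∞))
              * (⨆ z ∈ Metric.closedBall (0 : ℂ) r, (‖LiP (homog β ij.2) z‖₊ : ℝ≥0∞)) := by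
        intro n
        refine iSup₂_le fun z hz => ?_
        have hz1 : ‖z‖ < 1 := lt_of_le_of_lt (mem_closedBall_zero_iff.1 hz) hr1
        rw [ShufAux.homog_mul α β n hz1]
        calc (‖∑ ij ∈ Finset.HasAntidiagonal.antidiagonal n, LiP (homog α ij.1) z * LiP (homog β ij.2) z‖₊ : ℝ≥0∞)
            ≤ ∑ ij ∈ Finset.HasAntidiagonal.antidiagonal n,
                (‖LiP (homog α ij.1) z * LiP (homog β ij.2) z‖₊ : ℝ≥0∞) := by
              rw [← ENNReal.coe_finset_sum]
              exact_mod_cast nnnorm_sum_le _ _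
          _ ≤ ∑ ij ∈ Finset.HasAntidiagonal.antidiagonal n,
                (⨆ z ∈ Metric.closedBall (0 : ℂ) r, (‖LiP (homog α ij.1) z‖₊ : ℝ≥0∞))
                * (⨆ z ∈ Metric.closedBall (0 : ℂ) r, (‖LiP (homog β ij.2) z‖₊ : ℝ≥0∞)) := by
              refine Finset.sum_le_sum fun ij _ => ?_
              rw [nnnorm_mul, ENNReal.coe_mul]
              exact mul_le_mul'
                (le_iSup₂ (f := fun (z : ℂ) (_ : z ∈ Metric.closedBall (0 : ℂ) r) =>
                  (‖LiP (homog α ij.1) z‖₊ : ℝ≥0∞)) z hz)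
                (le_iSup₂ (f := fun (z : ℂ) (_ : z ∈ Metric.closedBall (0 : ℂ) r) =>
                  (‖LiP (homog β ij.2) z‖₊ : ℝ≥0∞)) z hz)
      calc ∑' n : ℕ, ⨆ z ∈ Metric.closedBall (0 : ℂ) r, (‖LiP (homog (shufA α β) n) z‖₊ : ℝ≥0∞)
          ≤ ∑' n : ℕ, ∑ ij ∈ Finset.HasAntidiagonal.antidiagonal n,
              (⨆ z ∈ Metric.closedBall (0 : ℂ) r, (‖LiP (homog α ij.1) z‖₊ : ℝ≥0∞))
              * (⨆ z ∈ Metric.closedBall (0 : ℂ) r, (‖LiP (homog β ij.2) z‖₊ : ℝ≥0∞)) :=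
            ENNReal.tsum_le_tsum hbound
        _ = (∑' n : ℕ, ⨆ z ∈ Metric.closedBall (0 : ℂ) r, (‖LiP (homog α n) z‖₊ : ℝ≥0∞))
            * (∑' n : ℕ, ⨆ z ∈ Metric.closedBall (0 : ℂ) r, (‖LiP (homog β n) z‖₊ : ℝ≥0∞)) := by
            exact ShufAux.tsum_antidiag
              (fun k => ⨆ z ∈ Metric.closedBall (0 : ℂ) r, (‖LiP (homog α k) z‖₊ : ℝ≥0∞))
              (fun k => ⨆ z ∈ Metric.closedBall (0 : ℂ) r, (‖LiP (homog β k) z‖₊ : ℝ≥0∞))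
        _ < ⊤ := ENNReal.mul_lt_top (hα r hr hrR) (hβ r hr hrR)
    · -- the product formula
      intro z hz
      have hz1 : ‖z‖ < 1 := lt_of_lt_of_le hz hR1
      set r : ℝ := (‖z‖ + R) / 2 with hrdef
      have hr0 : 0 < r := by
        have := norm_nonneg z
        rw [hrdef]; linarith
      have hrR : r < R := by rw [hrdef]; linarith
      have hzr : ‖z‖ ≤ r := by rw [hrdef]; linarith
      have hzball : z ∈ Metric.closedBall (0 : ℂ) r := mem_closedBall_zero_iff.2 hzr
      have sum_of : ∀ γ : Comp → ℂ, γ ∈ DomR R →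
          Summable (fun n : ℕ => ‖LiP (homog γ n) z‖) := by
        intro γ hγ
        have h1 : (∑' n : ℕ, (‖LiP (homog γ n) z‖₊ : ℝ≥0∞)) ≠ ⊤ := by
          refine ne_of_lt (lt_of_le_of_lt (ENNReal.tsum_le_tsum fun n => ?_) (hγ r hr0 hrR))
          exact le_iSup₂ (f := fun (z : ℂ) (_ : z ∈ Metric.closedBall (0 : ℂ) r) =>
            (‖LiP (homog γ n) z‖₊ : ℝ≥0∞)) z hzball
        have h2 : Summable (fun n : ℕ => ‖LiP (homog γ n) z‖₊) :=
          ENNReal.tsum_coe_ne_top_iff_summable.1 h1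
        have h3 := NNReal.summable_coe.2 h2
        simpa [coe_nnnorm] using h3
      rw [tsum_mul_tsum_eq_tsum_sum_antidiagonal_of_summable_norm
        (sum_of α hα) (sum_of β hβ)]
      exact tsum_congr fun n => ShufAux.homog_mul α β n hz1
end

section
/- For all compositions u, v and every N ∈ ℕ, H_u(N)·H_v(N) = Σ_w (u ⧛ v)(w)·H_w(N), the (finite) sum ranging over all compositions w; that is, H_• is a stuffle character: H_{u⧛v}(N) = H_u(N)·H_v(N). -/
open scoped NNReal ENNReal

/-- Stuffle coefficient on compositions: `⟨u ⧛ v, w⟩`, defined by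
`u ⧛ ε = ε ⧛ u = u` and
`(s::u) ⧛ (t::v) = s::(u ⧛ (t::v)) + t::((s::u) ⧛ v) + (s+t)::(u ⧛ v)`. -/
def stuf : Comp → Comp → Comp → ℤ
  | [], v, w => if w = v then 1 else 0
  | u, [], w => if w = u then 1 else 0
  | _ :: _, _ :: _, [] => 0
  | s :: u, t :: v, c :: w =>
      (if c = s then stuf u (t :: v) w else 0) +
      (if c = t then stuf (s :: u) v w else 0) +
      (if c = s + t then stuf u v w else 0)
termination_by u v _ => u.length + v.length

open Function
lemma stuf_nil_left (v w : Comp) : stuf [] v w = if w = v then 1 else 0 := by simp [stuf]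
lemma stuf_nil_right (u w : Comp) : stuf u [] w = if w = u then 1 else 0 := by
  cases u <;> simp [stuf]

def consInd (s : ℕ+) (f : Comp → ℤ) : Comp → ℤ
  | [] => 0
  | c :: w => if c = s then f w else 0

lemma consInd_supp {s : ℕ+} {f : Comp → ℤ} (hf : (support f).Finite) :
    (support (consInd s f)).Finite := by
  apply Set.Finite.subset (hf.image (s :: ·))
  intro w hw
  match w with
  | [] => simp [consInd] at hw
  | c :: w =>
    simp only [consInd, mem_support] at hw
    rcases eq_or_ne c s with rfl | h
    · exact ⟨w, by simpa using hw, rfl⟩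
    · simp [h] at hw

lemma tsum_consInd (s : ℕ+) (f : Comp → ℤ) (g : Comp → ℂ) :
    ∑' w, (consInd s f w : ℂ) * g w = ∑' w, (f w : ℂ) * g (s :: w) := by
  rw [← Function.Injective.tsum_eq (g := (s :: ·)) (fun a b h => by simpa using h)]
  · simp [consInd]
  · intro w hw
    simp only [mem_support] at hw
    match w with
    | [] => simp [consInd] at hw
    | c :: w =>
      have : c = s := by by_contra h; simp [consInd, h] at hw
      exact ⟨w, by rw [this]⟩

lemma stuf_cons_eq (s t : ℕ+) (u v : Comp) :
    stuf (s::u) (t::v) = fun w =>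
      consInd s (stuf u (t::v)) w + consInd t (stuf (s::u) v) w +
        consInd (s+t) (stuf u v) w := by
  funext w
  match w with
  | [] => simp [stuf, consInd]
  | c :: w => rw [stuf]; simp [consInd]

lemma stuf_supp_finite (u v : Comp) : (support (stuf u v)).Finite := by
  have key : ∀ n (u v : Comp), u.length + v.length = n → (support (stuf u v)).Finite := by
    intro n
    induction n using Nat.strong_induction_on with
    | _ n ih =>
      intro u v hn
      match u, v with
      | [], v => exact (Set.finite_singleton v).subset (fun w hw => by
          simp only [mem_support, stuf_nil_left] at hw
          simpa using (by by_contra h; simp [h] at hw : w = v))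
      | u, [] => exact (Set.finite_singleton u).subset (fun w hw => by
          simp only [mem_support, stuf_nil_right] at hw
          simpa using (by by_contra h; simp [h] at hw : w = u))
      | s :: u, t :: v =>
        rw [stuf_cons_eq]
        have h1 := consInd_supp (s := s) (ih _ (by simp only [List.length_cons] at hn ⊢; omega) u (t::v) rfl)
        have h2 := consInd_supp (s := t) (ih _ (by simp only [List.length_cons] at hn ⊢; omega) (s::u) v rfl)
        have h3 := consInd_supp (s := s+t) (ih _ (by simp only [List.length_cons] at hn ⊢; omega) u v rfl)
        apply Set.Finite.subset ((h1.union h2).union h3)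
        intro w hw
        simp only [mem_support] at hw
        by_contra hc
        simp only [Set.mem_union, mem_support, not_or, not_not] at hc
        simp [hc.1.1, hc.1.2, hc.2] at hw
  exact key _ u v rfl

lemma summable_mul_stuf {f : Comp → ℤ} (hf : (support f).Finite) (g : Comp → ℂ) :
    Summable (fun w => (f w : ℂ) * g w) := by
  apply summable_of_finite_support
  apply hf.subset
  intro w hw
  simp only [mem_support] at hw ⊢
  intro h; rw [h] at hw; simp at hw

lemma Hc_succ (s : ℕ+) (u : Comp) (N : ℕ) :
    Hc (s::u) (N+1) = Hc (s::u) N + (((N+1 : ℕ) : ℂ) ^ (s : ℕ))⁻¹ * Hc u N := by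
  rw [Hc, Hc, Finset.sum_Icc_succ_top (by omega)]
  simp

lemma prod_step (s t : ℕ+) (u v : Comp) (N : ℕ) :
    Hc (s::u) N * Hc (t::v) N = ∑ n ∈ Finset.Icc 1 N,
      (((n : ℂ) ^ (s : ℕ))⁻¹ * (Hc u (n-1) * Hc (t::v) (n-1))
       + ((n : ℂ) ^ (t : ℕ))⁻¹ * (Hc (s::u) (n-1) * Hc v (n-1))
       + ((n : ℂ) ^ ((s : ℕ) + (t : ℕ)))⁻¹ * (Hc u (n-1) * Hc v (n-1))) := by
  induction N with
  | zero => simp [Hc]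
  | succ N ih =>
    rw [Finset.sum_Icc_succ_top (by omega), ← ih, Hc_succ, Hc_succ]
    have hne : ((N+1 : ℕ) : ℂ) ≠ 0 := by exact_mod_cast Nat.succ_ne_zero N
    simp only [Nat.add_sub_cancel, pow_add, mul_inv]
    ring


/-- `H_•` is a stuffle character: for all compositions `u, v` and every `N`,
`H_u(N)·H_v(N) = Σ_w (u ⧛ v)(w)·H_w(N)` (a finite sum over compositions,
realized as a `tsum`). -/
theorem harmonic_stuffle_character (u v : Comp) (N : ℕ) :
    Hc u N * Hc v N = ∑' w : Comp, (stuf u v w : ℂ) * Hc w N := by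
  have key : ∀ n (u v : Comp), u.length + v.length = n → ∀ N,
      Hc u N * Hc v N = ∑' w : Comp, (stuf u v w : ℂ) * Hc w N := by
    intro n
    induction n using Nat.strong_induction_on with
    | _ n ih =>
      intro u v hn N
      match u, v with
      | [], v =>
        simp only [stuf_nil_left, Hc]
        rw [one_mul]
        rw [show (fun w => (((if w = v then 1 else 0 : ℤ)) : ℂ) * Hc w N)
            = fun w => (if w = v then Hc v N else 0) from funext fun w => by
          split <;> simp_all]
        exact (tsum_ite_eq v (fun _ => Hc v N)).symm
      | s :: u', [] =>
        simp only [stuf_nil_right]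
        rw [show (fun w => (((if w = (s::u') then 1 else 0 : ℤ)) : ℂ) * Hc w N)
            = fun w => (if w = (s::u') then Hc (s::u') N else 0) from funext fun w => by
          split <;> simp_all]
        rw [tsum_ite_eq (s::u') (fun _ => Hc (s::u') N)]
        simp [Hc]
      | s :: u, t :: v =>
        have F1 := stuf_supp_finite u (t::v)
        have F2 := stuf_supp_finite (s::u) v
        have F3 := stuf_supp_finite u v
        rw [show (fun w => (stuf (s::u) (t::v) w : ℂ) * Hc w N)
            = fun w => (consInd s (stuf u (t::v)) w : ℂ) * Hc w N
              + (consInd t (stuf (s::u) v) w : ℂ) * Hc w N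
              + (consInd (s+t) (stuf u v) w : ℂ) * Hc w N from funext fun w => by
          rw [stuf_cons_eq]; push_cast; ring]
        rw [Summable.tsum_add (((summable_mul_stuf (consInd_supp F1) _).add
              (summable_mul_stuf (consInd_supp F2) _)))
            (summable_mul_stuf (consInd_supp F3) _),
          Summable.tsum_add (summable_mul_stuf (consInd_supp F1) _)
            (summable_mul_stuf (consInd_supp F2) _),
          tsum_consInd, tsum_consInd, tsum_consInd]
        have step : ∀ (c : ℕ+) (a b : Comp), a.length + b.length < n →
            (∑' w, ((stuf a b) w : ℂ) * Hc (c :: w) N)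
            = ∑ m ∈ Finset.Icc 1 N, ((m : ℂ) ^ (c : ℕ))⁻¹ * (Hc a (m-1) * Hc b (m-1)) := by
          intro c a b hab
          have hsum : ∀ m : ℕ, Summable (fun w => ((m:ℂ) ^ (c:ℕ))⁻¹ *
              ((stuf a b w : ℂ) * Hc w (m-1))) :=
            fun m => (summable_mul_stuf (stuf_supp_finite a b) _).mul_left _
          calc ∑' w, ((stuf a b) w : ℂ) * Hc (c :: w) N
              = ∑' w, ∑ m ∈ Finset.Icc 1 N, ((m:ℂ) ^ (c:ℕ))⁻¹ *
                  ((stuf a b w : ℂ) * Hc w (m-1)) := by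
                congr 1; funext w; rw [Hc, Finset.mul_sum]; congr 1; funext m; ring
            _ = ∑ m ∈ Finset.Icc 1 N, ∑' w, ((m:ℂ) ^ (c:ℕ))⁻¹ *
                  ((stuf a b w : ℂ) * Hc w (m-1)) := Summable.tsum_finsetSum (fun m _ => hsum m)
            _ = ∑ m ∈ Finset.Icc 1 N, ((m : ℂ) ^ (c : ℕ))⁻¹ * (Hc a (m-1) * Hc b (m-1)) := by
                refine Finset.sum_congr rfl fun m _ => ?_
                rw [tsum_mul_left, ← ih _ hab a b rfl]
        rw [step s u (t::v) (by simp at hn ⊢; omega),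
            step t (s::u) v (by simp at hn ⊢; omega),
            step (s+t) u v (by simp at hn ⊢; omega),
            prod_step, ← Finset.sum_add_distrib, ← Finset.sum_add_distrib]
        refine Finset.sum_congr rfl fun m _ => ?_
        norm_cast
  exact key _ u v rfl N
end
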